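/- arXiv:1709.05796 — 7 statements merged into one kernel-verified Lean document; each statement's English description precedes it below -/
import Mathlib

section
/- For all real numbers A > 0, B > 0 and t > 0, the integral ∫₀ᵗ s^(−3/2) (t−s)^(−1/2) exp(−A/s) exp(−B/(t−s)) ds equals √(π/(A·t)) · exp(−(√A + √B)²/t). -/
open MeasureTheory Real

-- change of variables f(x) = x - c/x maps Ioi 0 onto ℝ
lemma glasser_total (c : ℝ) (hc : 0 < c) :
    ∫ x in Set.Ioi (0:ℝ), (1 + c/x^2) * Real.exp (-(x - c/x)^2) = Real.sqrt π := by
  have himg : (fun x : ℝ => x - c/x) '' Set.Ioi 0 = Set.univ := by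
    apply Set.eq_univ_of_forall
    intro u
    refine ⟨(u + Real.sqrt (u^2 + 4*c))/2, ?_, ?_⟩
    · have h1 : |u| < Real.sqrt (u^2 + 4*c) := by
        rw [← Real.sqrt_sq_eq_abs]
        exact Real.sqrt_lt_sqrt (sq_nonneg u) (by linarith)
      have := neg_abs_le u
      simp only [Set.mem_Ioi]
      linarith
    · have hx : (0:ℝ) < (u + Real.sqrt (u^2 + 4*c))/2 := by
        have h1 : |u| < Real.sqrt (u^2 + 4*c) := by
          rw [← Real.sqrt_sq_eq_abs]
          exact Real.sqrt_lt_sqrt (sq_nonneg u) (by linarith)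
        have := neg_abs_le u
        linarith
      set x := (u + Real.sqrt (u^2 + 4*c))/2 with hxdef
      have hsq : Real.sqrt (u^2 + 4*c) ^ 2 = u^2 + 4*c := Real.sq_sqrt (by positivity)
      have hx2 : x^2 - u*x - c = 0 := by
        rw [hxdef]; linear_combination hsq / 4
      field_simp
      nlinarith [hx2]
  have hderiv : ∀ x ∈ Set.Ioi (0:ℝ), HasDerivWithinAt (fun x : ℝ => x - c/x)
      (1 + c/x^2) (Set.Ioi 0) x := by
    intro x hx
    have hx0 : x ≠ 0 := ne_of_gt hx
    have : HasDerivAt (fun x : ℝ => x - c/x) (1 - c * (-(x^2)⁻¹)) x := by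
      simpa [div_eq_mul_inv] using (hasDerivAt_id' x).fun_sub ((hasDerivAt_inv hx0).const_mul c)
    exact this.hasDerivWithinAt.congr_deriv (by field_simp; ring)
  have hinj : Set.InjOn (fun x : ℝ => x - c/x) (Set.Ioi 0) := by
    have : StrictMonoOn (fun x : ℝ => x - c/x) (Set.Ioi 0) := by
      intro a ha b hb hab
      simp only [Set.mem_Ioi] at ha hb
      have : c/b < c/a := by
        apply div_lt_div_of_pos_left hc ha hab
      simp only
      linarith
    exact this.injOn
  have := MeasureTheory.integral_image_eq_integral_abs_deriv_smul (measurableSet_Ioi)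
    hderiv hinj (fun u => Real.exp (-u^2))
  rw [himg] at this
  rw [MeasureTheory.setIntegral_univ] at this
  have hg : ∫ u : ℝ, Real.exp (-u^2) = Real.sqrt π := by
    simpa using integral_gaussian 1
  rw [hg] at this
  rw [this]
  apply setIntegral_congr_fun measurableSet_Ioi
  intro x hx
  simp only [Set.mem_Ioi] at hx
  have : |1 + c/x^2| = 1 + c/x^2 := abs_of_pos (by positivity)
  simp [this, smul_eq_mul]

lemma glasser_refl (c : ℝ) (hc : 0 < c) :
    ∫ x in Set.Ioi (0:ℝ), (c/x^2) * Real.exp (-(x - c/x)^2)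
      = ∫ x in Set.Ioi (0:ℝ), Real.exp (-(x - c/x)^2) := by
  have himg : (fun x : ℝ => c/x) '' Set.Ioi 0 = Set.Ioi 0 := by
    ext y
    constructor
    · rintro ⟨x, hx, rfl⟩
      simp only [Set.mem_Ioi] at hx ⊢
      positivity
    · intro hy
      simp only [Set.mem_Ioi] at hy
      exact ⟨c/y, by simp only [Set.mem_Ioi]; positivity, by field_simp⟩
  have hderiv : ∀ x ∈ Set.Ioi (0:ℝ), HasDerivWithinAt (fun x : ℝ => c/x)
      (-(c/x^2)) (Set.Ioi 0) x := by
    intro x hx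
    have hx0 : x ≠ 0 := ne_of_gt hx
    have : HasDerivAt (fun x : ℝ => c/x) (c * (-(x^2)⁻¹)) x := by
      simpa [div_eq_mul_inv] using (hasDerivAt_inv hx0).const_mul c
    exact this.hasDerivWithinAt.congr_deriv (by field_simp)
  have hinj : Set.InjOn (fun x : ℝ => c/x) (Set.Ioi 0) := by
    intro a ha b hb hab
    simp only [Set.mem_Ioi] at ha hb
    field_simp at hab
    exact hab.symm
  have := MeasureTheory.integral_image_eq_integral_abs_deriv_smul (measurableSet_Ioi)
    hderiv hinj (fun x => Real.exp (-(x - c/x)^2))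
  rw [himg] at this
  rw [this]
  apply setIntegral_congr_fun measurableSet_Ioi
  intro x hx
  simp only [Set.mem_Ioi] at hx
  have h1 : |(-(c/x^2))| = c/x^2 := by
    rw [abs_neg]; exact abs_of_pos (by positivity)
  have h2 : (c/x - c/(c/x))^2 = (x - c/x)^2 := by
    rw [div_div_eq_mul_div, mul_comm, mul_div_assoc, div_self (ne_of_gt hc), mul_one]
    ring
  simp [h1, h2, smul_eq_mul]

lemma glasser (c : ℝ) (hc : 0 < c) :
    ∫ x in Set.Ioi (0:ℝ), Real.exp (-(x - c/x)^2) = Real.sqrt π / 2 := by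
  have hcont : ContinuousOn (fun x : ℝ => Real.exp (-(x - c/x)^2)) (Set.Ioi 0) := by
    fun_prop (disch := intro x hx; simp only [Set.mem_Ioi] at hx; positivity)
  have hint_total : IntegrableOn (fun x : ℝ => (1 + c/x^2) * Real.exp (-(x - c/x)^2))
      (Set.Ioi 0) := by
    have himg : (fun x : ℝ => x - c/x) '' Set.Ioi 0 = Set.univ := by
      apply Set.eq_univ_of_forall
      intro u
      refine ⟨(u + Real.sqrt (u^2 + 4*c))/2, ?_, ?_⟩
      · have h1 : |u| < Real.sqrt (u^2 + 4*c) := by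
          rw [← Real.sqrt_sq_eq_abs]
          exact Real.sqrt_lt_sqrt (sq_nonneg u) (by linarith)
        have := neg_abs_le u
        simp only [Set.mem_Ioi]
        linarith
      · have h1 : |u| < Real.sqrt (u^2 + 4*c) := by
          rw [← Real.sqrt_sq_eq_abs]
          exact Real.sqrt_lt_sqrt (sq_nonneg u) (by linarith)
        have h2 := neg_abs_le u
        have hx : (0:ℝ) < (u + Real.sqrt (u^2 + 4*c))/2 := by linarith
        set x := (u + Real.sqrt (u^2 + 4*c))/2 with hxdef
        have hsq : Real.sqrt (u^2 + 4*c) ^ 2 = u^2 + 4*c := Real.sq_sqrt (by positivity)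
        have hx2 : x^2 - u*x - c = 0 := by
          rw [hxdef]; linear_combination hsq / 4
        field_simp
        nlinarith [hx2]
    have hderiv : ∀ x ∈ Set.Ioi (0:ℝ), HasDerivWithinAt (fun x : ℝ => x - c/x)
        (1 + c/x^2) (Set.Ioi 0) x := by
      intro x hx
      have hx0 : x ≠ 0 := ne_of_gt hx
      have : HasDerivAt (fun x : ℝ => x - c/x) (1 - c * (-(x^2)⁻¹)) x := by
        simpa [div_eq_mul_inv] using (hasDerivAt_id' x).fun_sub ((hasDerivAt_inv hx0).const_mul c)
      exact this.hasDerivWithinAt.congr_deriv (by field_simp; ring)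
    have hinj : Set.InjOn (fun x : ℝ => x - c/x) (Set.Ioi 0) := by
      have : StrictMonoOn (fun x : ℝ => x - c/x) (Set.Ioi 0) := by
        intro a ha b hb hab
        simp only [Set.mem_Ioi] at ha hb
        have : c/b < c/a := div_lt_div_of_pos_left hc ha hab
        simp only
        linarith
      exact this.injOn
    have hiff := MeasureTheory.integrableOn_image_iff_integrableOn_abs_deriv_smul
      (measurableSet_Ioi) hderiv hinj (fun u => Real.exp (-u^2))
    rw [himg] at hiff
    have hg : IntegrableOn (fun u : ℝ => Real.exp (-u^2)) Set.univ := by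
      rw [integrableOn_univ]
      simpa using integrable_exp_neg_mul_sq (show (0:ℝ) < 1 by norm_num)
    have := hiff.mp hg
    apply this.congr_fun ?_ measurableSet_Ioi
    intro x hx
    simp only [Set.mem_Ioi] at hx
    have : |1 + c/x^2| = 1 + c/x^2 := abs_of_pos (by positivity)
    simp [this, smul_eq_mul]
  have hint1 : IntegrableOn (fun x : ℝ => Real.exp (-(x - c/x)^2)) (Set.Ioi 0) := by
    apply hint_total.mono' (hcont.aestronglyMeasurable measurableSet_Ioi)
    filter_upwards [ae_restrict_mem measurableSet_Ioi] with x hx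
    simp only [Set.mem_Ioi] at hx
    rw [Real.norm_eq_abs, abs_of_pos (Real.exp_pos _)]
    nlinarith [Real.exp_pos (-(x - c/x)^2), div_pos hc (pow_pos hx 2),
      mul_pos (div_pos hc (pow_pos hx 2)) (Real.exp_pos (-(x - c/x)^2))]
  have hint2 : IntegrableOn (fun x : ℝ => (c/x^2) * Real.exp (-(x - c/x)^2)) (Set.Ioi 0) := by
    have hcont2 : ContinuousOn (fun x : ℝ => (c/x^2) * Real.exp (-(x - c/x)^2)) (Set.Ioi 0) := by
      fun_prop (disch := intro x hx; simp only [Set.mem_Ioi] at hx; positivity)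
    apply hint_total.mono' (hcont2.aestronglyMeasurable measurableSet_Ioi)
    filter_upwards [ae_restrict_mem measurableSet_Ioi] with x hx
    simp only [Set.mem_Ioi] at hx
    have h1 : (0:ℝ) < c/x^2 := by positivity
    rw [Real.norm_eq_abs, abs_of_pos (by positivity)]
    nlinarith [Real.exp_pos (-(x - c/x)^2)]
  have hsplit : ∫ x in Set.Ioi (0:ℝ), (1 + c/x^2) * Real.exp (-(x - c/x)^2)
      = (∫ x in Set.Ioi (0:ℝ), Real.exp (-(x - c/x)^2))
        + ∫ x in Set.Ioi (0:ℝ), (c/x^2) * Real.exp (-(x - c/x)^2) := by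
    rw [← integral_add hint1 hint2]
    congr 1 with x
    ring
  have h := glasser_total c hc
  rw [hsplit, glasser_refl c hc] at h
  linarith

lemma int_exp_sq_inv_sq (d : ℝ) (hd : 0 < d) :
    ∫ x in Set.Ioi (0:ℝ), Real.exp (-x^2 - d/x^2)
      = Real.sqrt π / 2 * Real.exp (-2 * Real.sqrt d) := by
  have hsd : Real.sqrt d ^ 2 = d := Real.sq_sqrt hd.le
  have key : ∀ x ∈ Set.Ioi (0:ℝ), Real.exp (-x^2 - d/x^2)
      = Real.exp (-(x - Real.sqrt d/x)^2) * Real.exp (-2 * Real.sqrt d) := by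
    intro x hx
    simp only [Set.mem_Ioi] at hx
    rw [← Real.exp_add]
    congr 1
    field_simp
    ring_nf
    linear_combination hsd
  rw [setIntegral_congr_fun measurableSet_Ioi key, integral_mul_const,
    glasser _ (Real.sqrt_pos.mpr hd)]

lemma int_rpow_exp (a b : ℝ) (ha : 0 < a) (hb : 0 < b) :
    ∫ x in Set.Ioi (0:ℝ), x ^ (-(3:ℝ)/2) * Real.exp (-a/x - b*x)
      = Real.sqrt (π/a) * Real.exp (-2 * Real.sqrt (a*b)) := by
  have himg : (fun u : ℝ => a/u^2) '' Set.Ioi 0 = Set.Ioi 0 := by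
    ext y
    constructor
    · rintro ⟨u, hu, rfl⟩
      simp only [Set.mem_Ioi] at hu ⊢
      positivity
    · intro hy
      simp only [Set.mem_Ioi] at hy
      refine ⟨Real.sqrt (a/y), by simp only [Set.mem_Ioi]; positivity, ?_⟩
      simp only
      rw [Real.sq_sqrt (by positivity)]
      field_simp
  have hderiv : ∀ u ∈ Set.Ioi (0:ℝ), HasDerivWithinAt (fun u : ℝ => a/u^2)
      (-(2*a/u^3)) (Set.Ioi 0) u := by
    intro u hu
    have hu0 : u ≠ 0 := ne_of_gt hu
    have h1 : HasDerivAt (fun u : ℝ => u^2) (2*u) u := by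
      simpa using hasDerivAt_pow 2 u
    have : HasDerivAt (fun u : ℝ => a/u^2) (-(a * (2*u)) / (u^2)^2) u := by
      simpa using (hasDerivAt_const u a).fun_div h1 (by positivity)
    exact this.hasDerivWithinAt.congr_deriv (by field_simp)
  have hinj : Set.InjOn (fun u : ℝ => a/u^2) (Set.Ioi 0) := by
    intro x hx y hy hxy
    simp only [Set.mem_Ioi] at hx hy
    simp only at hxy
    rw [div_eq_div_iff (by positivity) (by positivity)] at hxy
    have h2 : y^2 = x^2 := mul_left_cancel₀ ha.ne' hxy
    nlinarith
  have := MeasureTheory.integral_image_eq_integral_abs_deriv_smul (measurableSet_Ioi)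
    hderiv hinj (fun x => x ^ (-(3:ℝ)/2) * Real.exp (-a/x - b*x))
  rw [himg] at this
  rw [this]
  have heq : ∀ u ∈ Set.Ioi (0:ℝ),
      |(-(2*a/u^3))| • ((a/u^2) ^ (-(3:ℝ)/2) * Real.exp (-a/(a/u^2) - b*(a/u^2)))
      = (2 / Real.sqrt a) * Real.exp (-u^2 - a*b/u^2) := by
    intro u hu
    simp only [Set.mem_Ioi] at hu
    have hu0 : u ≠ 0 := ne_of_gt hu
    have h1 : |(-(2*a/u^3))| = 2*a/u^3 := by
      rw [abs_neg]; exact abs_of_pos (by positivity)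
    have h2 : (a/u^2) ^ (-(3:ℝ)/2) = a ^ (-(3:ℝ)/2) * u^3 := by
      rw [Real.div_rpow ha.le (by positivity)]
      rw [div_eq_mul_inv, ← Real.rpow_neg (by positivity)]
      congr 1
      rw [← Real.rpow_natCast u 2, ← Real.rpow_mul hu.le, ← Real.rpow_natCast u 3]
      norm_num
    have h3 : -a/(a/u^2) - b*(a/u^2) = -u^2 - a*b/u^2 := by
      field_simp
    rw [h1, h2, h3, smul_eq_mul]
    have h4 : a ^ (-(3:ℝ)/2) = (Real.sqrt a)⁻¹ * a⁻¹ := by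
      rw [Real.sqrt_eq_rpow, ← Real.rpow_neg_one a, ← Real.rpow_neg ha.le,
        ← Real.rpow_add ha]
      norm_num
    rw [h4]
    have hsa : Real.sqrt a ≠ 0 := by positivity
    field_simp
  rw [setIntegral_congr_fun measurableSet_Ioi heq, integral_const_mul,
    int_exp_sq_inv_sq _ (by positivity)]
  rw [Real.sqrt_div Real.pi_pos.le]
  have hsa : Real.sqrt a ≠ 0 := by positivity
  field_simp

lemma rpow_neg_half' (x : ℝ) (hx : 0 < x) : x ^ (-(1:ℝ)/2) = (Real.sqrt x)⁻¹ := by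
  rw [Real.sqrt_eq_rpow, ← Real.rpow_neg hx.le]
  norm_num

lemma rpow_neg_three_half' (x : ℝ) (hx : 0 < x) :
    x ^ (-(3:ℝ)/2) = (x * Real.sqrt x)⁻¹ := by
  rw [show (-(3:ℝ)/2) = -(1 + 1/2) by norm_num, Real.rpow_neg hx.le, Real.rpow_add hx,
    Real.rpow_one, Real.sqrt_eq_rpow]

theorem bessel_lemma1_integral (A B t : ℝ) (hA : 0 < A) (hB : 0 < B) (ht : 0 < t) :
    ∫ s in Set.Ioo (0:ℝ) t,
        s ^ (-(3:ℝ)/2) * (t - s) ^ (-(1:ℝ)/2) * Real.exp (-A/s) * Real.exp (-B/(t-s))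
      = Real.sqrt (π / (A * t)) * Real.exp (-(Real.sqrt A + Real.sqrt B)^2 / t) := by
  have himg : (fun y : ℝ => t*y/(1+y)) '' Set.Ioi 0 = Set.Ioo 0 t := by
    ext s
    constructor
    · rintro ⟨y, hy, rfl⟩
      simp only [Set.mem_Ioi] at hy
      have h1y : (0:ℝ) < 1 + y := by linarith
      constructor
      · positivity
      · rw [div_lt_iff₀ h1y]
        nlinarith
    · rintro ⟨hs0, hst⟩
      refine ⟨s/(t-s), ?_, ?_⟩
      · simp only [Set.mem_Ioi]
        have : 0 < t - s := by linarith
        positivity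
      · have h1 : t - s ≠ 0 := by intro h; linarith [sub_eq_zero.mp h]
        field_simp
        ring
  have hderiv : ∀ y ∈ Set.Ioi (0:ℝ), HasDerivWithinAt (fun y : ℝ => t*y/(1+y))
      (t/(1+y)^2) (Set.Ioi 0) y := by
    intro y hy
    simp only [Set.mem_Ioi] at hy
    have h1y : (1:ℝ) + y ≠ 0 := by positivity
    have hnum : HasDerivAt (fun y : ℝ => t*y) t y := by
      simpa using (hasDerivAt_id y).const_mul t
    have hden : HasDerivAt (fun y : ℝ => 1+y) 1 y := by
      simpa using (hasDerivAt_id y).const_add 1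
    have := hnum.fun_div hden h1y
    exact this.hasDerivWithinAt.congr_deriv (by field_simp; ring)
  have hinj : Set.InjOn (fun y : ℝ => t*y/(1+y)) (Set.Ioi 0) := by
    have : StrictMonoOn (fun y : ℝ => t*y/(1+y)) (Set.Ioi 0) := by
      intro a ha b hb hab
      simp only [Set.mem_Ioi] at ha hb
      simp only
      rw [div_lt_div_iff₀ (by linarith) (by linarith)]
      nlinarith
    exact this.injOn
  rw [← himg, MeasureTheory.integral_image_eq_integral_abs_deriv_smul measurableSet_Ioi
    hderiv hinj]
  have heq : ∀ y ∈ Set.Ioi (0:ℝ),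
      |t/(1+y)^2| • ((t*y/(1+y)) ^ (-(3:ℝ)/2) * (t - t*y/(1+y)) ^ (-(1:ℝ)/2)
        * Real.exp (-A/(t*y/(1+y))) * Real.exp (-B/(t - t*y/(1+y))))
      = (t⁻¹ * Real.exp (-(A+B)/t))
        * (y ^ (-(3:ℝ)/2) * Real.exp (-(A/t)/y - (B/t)*y)) := by
    intro y hy
    simp only [Set.mem_Ioi] at hy
    have h1y : (0:ℝ) < 1 + y := by linarith
    have habs : |t/(1+y)^2| = t/(1+y)^2 := abs_of_pos (by positivity)
    have hts : t - t*y/(1+y) = t/(1+y) := by field_simp; ring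
    rw [smul_eq_mul, habs, hts]
    have hP : t/(1+y)^2 * ((t*y/(1+y)) ^ (-(3:ℝ)/2) * (t/(1+y)) ^ (-(1:ℝ)/2))
        = t⁻¹ * y ^ (-(3:ℝ)/2) := by
      rw [rpow_neg_three_half' _ (by positivity), rpow_neg_half' _ (by positivity),
        rpow_neg_three_half' _ hy,
        show Real.sqrt (t*y/(1+y)) = Real.sqrt t * Real.sqrt y / Real.sqrt (1+y) by
          rw [Real.sqrt_div (by positivity), Real.sqrt_mul ht.le],
        Real.sqrt_div ht.le]
      have ha : Real.sqrt t * Real.sqrt t = t := Real.mul_self_sqrt ht.le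
      have hb : Real.sqrt y * Real.sqrt y = y := Real.mul_self_sqrt hy.le
      have hc : Real.sqrt (1+y) * Real.sqrt (1+y) = 1 + y := Real.mul_self_sqrt h1y.le
      have ha0 : Real.sqrt t ≠ 0 := by positivity
      have hb0 : Real.sqrt y ≠ 0 := by positivity
      have hc0 : Real.sqrt (1+y) ≠ 0 := by positivity
      field_simp
      linear_combination t * hc - (1+y) * ha
    have hX : -A/(t*y/(1+y)) + -B/(t/(1+y)) = (-(A+B)/t) + (-(A/t)/y - (B/t)*y) := by
      field_simp
      ring
    calc t/(1+y)^2 * ((t*y/(1+y)) ^ (-(3:ℝ)/2) * (t/(1+y)) ^ (-(1:ℝ)/2)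
          * Real.exp (-A/(t*y/(1+y))) * Real.exp (-B/(t/(1+y))))
        = (t/(1+y)^2 * ((t*y/(1+y)) ^ (-(3:ℝ)/2) * (t/(1+y)) ^ (-(1:ℝ)/2)))
          * Real.exp (-A/(t*y/(1+y)) + -B/(t/(1+y))) := by
            rw [Real.exp_add]; ring
      _ = (t⁻¹ * y ^ (-(3:ℝ)/2))
          * Real.exp ((-(A+B)/t) + (-(A/t)/y - (B/t)*y)) := by rw [hP, hX]
      _ = (t⁻¹ * Real.exp (-(A+B)/t))
          * (y ^ (-(3:ℝ)/2) * Real.exp (-(A/t)/y - (B/t)*y)) := by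
            rw [Real.exp_add]; ring
  rw [setIntegral_congr_fun measurableSet_Ioi heq, integral_const_mul,
    int_rpow_exp (A/t) (B/t) (by positivity) (by positivity)]
  have h5 : Real.sqrt ((A/t)*(B/t)) = Real.sqrt A * Real.sqrt B / t := by
    rw [show (A/t)*(B/t) = (A*B)/t^2 by ring, Real.sqrt_div (by positivity),
      Real.sqrt_sq ht.le, Real.sqrt_mul hA.le]
  have h6 : Real.sqrt (π/(A/t)) = t * Real.sqrt (π/(A*t)) := by
    rw [show π/(A/t) = t^2 * (π/(A*t)) by field_simp,
      Real.sqrt_mul (by positivity), Real.sqrt_sq ht.le]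
  rw [h5, h6]
  have h7 : -(A+B)/t + (-2 * (Real.sqrt A * Real.sqrt B / t))
      = -(Real.sqrt A + Real.sqrt B)^2 / t := by
    have hAq : Real.sqrt A ^ 2 = A := Real.sq_sqrt hA.le
    have hBq : Real.sqrt B ^ 2 = B := Real.sq_sqrt hB.le
    field_simp
    linear_combination hAq + hBq
  rw [← h7, Real.exp_add]
  field_simp
end

section
/- For all real numbers c > 0, d > 0 and t > 0, the integral ∫₀ᵗ s^(−1/2) (t−s)^(−1/2) exp(−c/s) exp(−d/(t−s)) ds equals 2√π · ∫_{(√c+√d)/√t}^{∞} exp(−u²) du. -/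
open MeasureTheory Real Filter Set

noncomputable def Phi (x : ℝ) : ℝ := ∫ u in Set.Ioi x, Real.exp (-u^2)

lemma gauss_integrable : MeasureTheory.Integrable (fun u : ℝ => Real.exp (-u^2)) := by
  simpa using integrable_exp_neg_mul_sq (one_pos)

lemma gauss_total : (∫ u : ℝ, Real.exp (-u^2)) = Real.sqrt π := by
  simpa using integral_gaussian 1

lemma Phi_eq (x : ℝ) : Phi x = Real.sqrt π - ∫ u in Set.Iic x, Real.exp (-u^2) := by
  have h := MeasureTheory.integral_add_compl (measurableSet_Iic (a := x))
      (gauss_integrable)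
  rw [compl_Iic] at h
  rw [Phi, ← gauss_total, ← h]
  ring

lemma Phi_hasDerivAt (x : ℝ) : HasDerivAt Phi (-Real.exp (-x^2)) x := by
  have h1 : ∀ y : ℝ, Phi y = (Real.sqrt π - ∫ u in Set.Iic (0:ℝ), Real.exp (-u^2))
      - ∫ u in (0:ℝ)..y, Real.exp (-u^2) := by
    intro y
    rw [Phi_eq, ← intervalIntegral.integral_Iic_sub_Iic gauss_integrable.integrableOn
      gauss_integrable.integrableOn]
    ring
  have h2 : HasDerivAt (fun y : ℝ => ∫ u in (0:ℝ)..y, Real.exp (-u^2))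
      (Real.exp (-x^2)) x := by
    refine intervalIntegral.integral_hasDerivAt_right
      (gauss_integrable.intervalIntegrable) ?_ (by fun_prop)
    exact ((Continuous.stronglyMeasurable (by fun_prop : Continuous fun u : ℝ => Real.exp (-u^2))).stronglyMeasurableAtFilter)
  have := (hasDerivAt_const x (Real.sqrt π - ∫ u in Set.Iic (0:ℝ), Real.exp (-u^2))).sub h2
  rw [zero_sub] at this
  exact this.congr_deriv rfl |>.congr_of_eventuallyEq (by filter_upwards with y; rw [h1]; rfl)

lemma Phi_nonneg (x : ℝ) : 0 ≤ Phi x :=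
  MeasureTheory.setIntegral_nonneg measurableSet_Ioi (fun u _ => (Real.exp_pos _).le)

lemma Phi_tendsto_atTop : Tendsto Phi atTop (nhds 0) := by
  have hb : ∀ x : ℝ, 1 ≤ x → Phi x ≤ Real.exp (-x) := by
    intro x hx
    have h1 : Phi x ≤ ∫ u in Set.Ioi x, Real.exp (-u) := by
      refine MeasureTheory.setIntegral_mono_on gauss_integrable.integrableOn
        ?_ measurableSet_Ioi ?_
      · simpa using exp_neg_integrableOn_Ioi x one_pos
      · intro u hu
        have hu1 : 1 ≤ u := hx.trans (le_of_lt hu)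
        have : u ≤ u^2 := by nlinarith
        exact Real.exp_le_exp.mpr (by linarith)
    rwa [integral_exp_neg_Ioi] at h1
  have h0 : Tendsto (fun x : ℝ => Real.exp (-x)) atTop (nhds 0) := by
    exact Real.tendsto_exp_atBot.comp tendsto_neg_atTop_atBot
  refine squeeze_zero' ?_ ?_ h0
  · filter_upwards with x using Phi_nonneg x
  · filter_upwards [eventually_ge_atTop (1:ℝ)] with x hx using hb x hx

lemma Phi_tendsto_atBot : Tendsto Phi atBot (nhds (Real.sqrt π)) := by
  have key : Tendsto (fun x : ℝ => ∫ u in Set.Iic x, Real.exp (-u^2)) atBot (nhds 0) := by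
    have hb : ∀ x : ℝ, x ≤ -1 → (∫ u in Set.Iic x, Real.exp (-u^2)) ≤ Real.exp x := by
      intro x hx
      have h1 : (∫ u in Set.Iic x, Real.exp (-u^2)) ≤ ∫ u in Set.Iic x, Real.exp u := by
        refine MeasureTheory.setIntegral_mono_on gauss_integrable.integrableOn
          (integrableOn_exp_Iic x) measurableSet_Iic ?_
        intro u hu
        have hu1 : u ≤ -1 := le_trans hu hx
        have : -u^2 ≤ u := by nlinarith
        exact Real.exp_le_exp.mpr this
      rwa [integral_exp_Iic] at h1
    have h0 : Tendsto (fun x : ℝ => Real.exp x) atBot (nhds 0) := Real.tendsto_exp_atBot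
    refine squeeze_zero' ?_ ?_ h0
    · filter_upwards with x
      exact MeasureTheory.setIntegral_nonneg measurableSet_Iic (fun u _ => (Real.exp_pos _).le)
    · filter_upwards [eventually_le_atBot (-1:ℝ)] with x hx using hb x hx
  have : Tendsto (fun x => Real.sqrt π - ∫ u in Set.Iic x, Real.exp (-u^2)) atBot
      (nhds (Real.sqrt π - 0)) := tendsto_const_nhds.sub key
  rw [sub_zero] at this
  exact this.congr (fun x => (Phi_eq x).symm)

lemma my_integral_Ioo_of_hasDerivAt_of_nonneg {a b La Lb : ℝ} {F f : ℝ → ℝ} (hab : a < b)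
    (hd : ∀ x ∈ Set.Ioo a b, HasDerivAt F (f x) x)
    (hfc : ContinuousOn f (Set.Ioo a b))
    (hnn : ∀ x ∈ Set.Ioo a b, 0 ≤ f x)
    (hFa : Tendsto F (nhdsWithin a (Set.Ioo a b)) (nhds La))
    (hFb : Tendsto F (nhdsWithin b (Set.Ioo a b)) (nhds Lb)) :
    IntegrableOn f (Set.Ioo a b) ∧ ∫ x in Set.Ioo a b, f x = Lb - La := by
  set an : ℕ → ℝ := fun n => a + (b - a)/(n + 2) with han
  set bn : ℕ → ℝ := fun n => b - (b - a)/(n + 2) with hbn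
  have hδpos : ∀ n : ℕ, 0 < (b - a)/((n:ℝ) + 2) := fun n =>
    div_pos (by linarith) (by positivity)
  have hδ : Tendsto (fun n : ℕ => (b - a)/((n:ℝ) + 2)) atTop (nhds 0) := by
    apply Tendsto.div_atTop tendsto_const_nhds
    exact tendsto_atTop_add_const_right _ _ tendsto_natCast_atTop_atTop
  have ha' : Tendsto an atTop (nhds a) := by
    have := tendsto_const_nhds (x := a) (f := atTop (α := ℕ)) |>.add hδ
    simpa using this
  have hb' : Tendsto bn atTop (nhds b) := by
    have := tendsto_const_nhds (x := b) (f := atTop (α := ℕ)) |>.sub hδ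
    simpa using this
  have haan : ∀ n, a < an n := fun n => by
    have := hδpos n; simp only [han]; linarith
  have hbbn : ∀ n, bn n < b := fun n => by
    have := hδpos n; simp only [hbn]; linarith
  have hanbn : ∀ n, an n ≤ bn n := by
    intro n
    have h2 : (b - a)/((n:ℝ) + 2) ≤ (b - a)/2 := by
      apply div_le_div_of_nonneg_left (by linarith) (by norm_num)
      · push_cast; linarith [Nat.cast_nonneg (α := ℝ) n]
    simp only [han, hbn]; linarith
  have hsub : ∀ n, Set.Icc (an n) (bn n) ⊆ Set.Ioo a b := fun n x hx =>
    ⟨lt_of_lt_of_le (haan n) hx.1, lt_of_le_of_lt hx.2 (hbbn n)⟩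
  have hcover : AECover (volume.restrict (Set.Ioo a b)) atTop
      (fun n => Set.Icc (an n) (bn n)) := aecover_Ioo_of_Icc ha' hb'
  -- continuity of F on the Icc pieces
  have hFcont : ∀ n, ContinuousOn F (Set.Icc (an n) (bn n)) := fun n x hx =>
    ((hd x (hsub n hx)).continuousAt).continuousWithinAt
  have hfint : ∀ n, IntegrableOn f (Set.Icc (an n) (bn n)) := fun n =>
    (hfc.mono (hsub n)).integrableOn_compact isCompact_Icc
  have hval : ∀ n, (∫ x in Set.Icc (an n) (bn n), f x) = F (bn n) - F (an n) := by
    intro n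
    rw [MeasureTheory.integral_Icc_eq_integral_Ioc, ← intervalIntegral.integral_of_le (hanbn n)]
    refine intervalIntegral.integral_eq_sub_of_hasDerivAt_of_le (hanbn n)
      (hFcont n) (fun x hx => hd x (hsub n (Set.Ioo_subset_Icc_self hx))) ?_
    rw [intervalIntegrable_iff_integrableOn_Ioc_of_le (hanbn n)]
    exact (hfint n).mono_set Set.Ioc_subset_Icc_self
  have htendF : Tendsto (fun n => F (bn n) - F (an n)) atTop (nhds (Lb - La)) := by
    refine Tendsto.sub (hFb.comp ?_) (hFa.comp ?_)
    · exact tendsto_nhdsWithin_of_tendsto_nhds_of_eventually_within _ hb'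
        (Eventually.of_forall (fun n => ⟨lt_of_lt_of_le (haan n) (hanbn n), hbbn n⟩))
    · exact tendsto_nhdsWithin_of_tendsto_nhds_of_eventually_within _ ha'
        (Eventually.of_forall (fun n => ⟨haan n, lt_of_le_of_lt (hanbn n) (hbbn n)⟩))
  -- integrals with respect to the restricted measure
  have hrestrict : ∀ (g : ℝ → ℝ) (n : ℕ),
      (∫ x in Set.Icc (an n) (bn n), g x ∂(volume.restrict (Set.Ioo a b)))
        = ∫ x in Set.Icc (an n) (bn n), g x := by
    intro g n
    rw [Measure.restrict_restrict measurableSet_Icc,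
      Set.inter_eq_self_of_subset_left (hsub n)]
  have hfint' : ∀ n, IntegrableOn f (Set.Icc (an n) (bn n)) (volume.restrict (Set.Ioo a b)) := by
    intro n
    rw [IntegrableOn, Measure.restrict_restrict measurableSet_Icc,
      Set.inter_eq_self_of_subset_left (hsub n)]
    exact hfint n
  have hnorm : ∀ n, (∫ x in Set.Icc (an n) (bn n), ‖f x‖ ∂(volume.restrict (Set.Ioo a b)))
      = F (bn n) - F (an n) := by
    intro n
    rw [hrestrict, ← hval n]
    refine MeasureTheory.setIntegral_congr_fun measurableSet_Icc (fun x hx => ?_)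
    exact Real.norm_of_nonneg (hnn x (hsub n hx))
  have hInt : Integrable f (volume.restrict (Set.Ioo a b)) := by
    refine hcover.integrable_of_integral_norm_tendsto (Lb - La) hfint' ?_
    exact (tendsto_congr (fun n => (hnorm n).symm)).mp htendF
  refine ⟨hInt, ?_⟩
  refine hcover.integral_eq_of_tendsto (Lb - La) hInt ?_
  refine (tendsto_congr (fun n => ?_)).mp htendF
  rw [hrestrict, hval]

lemma xi_hasDerivAt (a b t : ℝ) {s : ℝ} (hs0 : 0 < s) (hst : s < t) :
    HasDerivAt (fun x => (a*(t-x) - b*x)/(Real.sqrt t * Real.sqrt x * Real.sqrt (t-x)))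
      (-(t*(a*(t-s)+b*s)) / (2 * Real.sqrt t * (s*Real.sqrt s) * ((t-s)*Real.sqrt (t-s)))) s := by
  have ht : 0 < t := hs0.trans hst
  have hts : 0 < t - s := by linarith
  set p := Real.sqrt s with hpdef
  set q := Real.sqrt (t-s) with hqdef
  set r := Real.sqrt t with hrdef
  have hp : 0 < p := Real.sqrt_pos.mpr hs0
  have hq : 0 < q := Real.sqrt_pos.mpr hts
  have hr : 0 < r := Real.sqrt_pos.mpr ht
  have hp2 : p^2 = s := Real.sq_sqrt hs0.le
  have hq2 : q^2 = t - s := Real.sq_sqrt hts.le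
  have hr2 : r^2 = t := Real.sq_sqrt ht.le
  have hN : HasDerivAt (fun x => a*(t-x) - b*x) (-a-b) s := by
    have h := ((hasDerivAt_id s).const_mul (a+b)).const_sub (a*t)
    have : (fun x => a*(t-x) - b*x) = (fun x => a*t - (a+b)*x) := by
      funext x; ring
    rw [this]
    refine h.congr_deriv ?_; ring
  have hD : HasDerivAt (fun x => Real.sqrt t * Real.sqrt x * Real.sqrt (t-x))
      (r * (1/(2*p)) * q + (r * p) * (-(1/(2*q)))) s := by
    have h1 : HasDerivAt (fun x : ℝ => Real.sqrt t * Real.sqrt x) (r * (1/(2*p))) s := by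
      exact (Real.hasDerivAt_sqrt hs0.ne').const_mul (Real.sqrt t)
    have h2 : HasDerivAt (fun x : ℝ => Real.sqrt (t-x)) (-(1/(2*q))) s := by
      have hin : HasDerivAt (fun x : ℝ => t - x) (-1) s := by
        simpa using (hasDerivAt_id s).const_sub t
      have := (Real.hasDerivAt_sqrt hts.ne').comp s hin
      refine this.congr_deriv ?_
      rw [← hqdef]
      ring
    exact h1.mul h2
  have hDne : r * p * q ≠ 0 := by positivity
  have h := hN.div hD hDne
  refine h.congr_deriv ?_
  simp only [← hpdef, ← hqdef, ← hrdef]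
  have hr' : r^2 = p^2 + q^2 := by rw [hp2, hq2, hr2]; ring
  rw [show t = p^2 + q^2 by rw [← hr2, hr'], show s = p^2 from hp2.symm]
  field_simp
  ring_nf

lemma exp_identity {a b t s : ℝ} (hs0 : 0 < s) (hst : s < t) :
    Real.exp (-(a+b)^2/t) *
      Real.exp (-(((a*(t-s) - b*s)/(Real.sqrt t * Real.sqrt s * Real.sqrt (t-s)))^2))
      = Real.exp (-(a^2)/s) * Real.exp (-(b^2)/(t-s)) := by
  have ht : 0 < t := hs0.trans hst
  have hts : 0 < t - s := by linarith
  rw [← Real.exp_add, ← Real.exp_add]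
  congr 1
  have hsq : (Real.sqrt t * Real.sqrt s * Real.sqrt (t-s))^2 = t * s * (t-s) := by
    rw [mul_pow, mul_pow, Real.sq_sqrt ht.le, Real.sq_sqrt hs0.le, Real.sq_sqrt hts.le]
  rw [div_pow, hsq]
  field_simp
  ring

lemma lemA {c d t : ℝ} (hc : 0 < c) (hd : 0 < d) (ht : 0 < t) :
    IntegrableOn (fun s => Real.exp (-c/s) * Real.exp (-d/(t-s))
        / (s * Real.sqrt s * Real.sqrt (t-s))) (Set.Ioo 0 t) ∧
    (∫ s in Set.Ioo (0:ℝ) t, Real.exp (-c/s) * Real.exp (-d/(t-s))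
        / (s * Real.sqrt s * Real.sqrt (t-s)))
      = Real.sqrt π / (Real.sqrt c * Real.sqrt t)
          * Real.exp (-(Real.sqrt c + Real.sqrt d)^2/t) := by
  set a := Real.sqrt c with hadef
  set b := Real.sqrt d with hbdef
  have ha : 0 < a := Real.sqrt_pos.mpr hc
  have hb : 0 < b := Real.sqrt_pos.mpr hd
  have ha2 : a^2 = c := Real.sq_sqrt hc.le
  have hb2 : b^2 = d := Real.sq_sqrt hd.le
  have hrt : 0 < Real.sqrt t := Real.sqrt_pos.mpr ht
  set ξ : ℝ → ℝ := fun x => (a*(t-x) - b*x)/(Real.sqrt t * Real.sqrt x * Real.sqrt (t-x))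
    with hxidef
  set η : ℝ → ℝ := fun x => (a*(t-x) - (-b)*x)/(Real.sqrt t * Real.sqrt x * Real.sqrt (t-x))
    with hetadef
  set F : ℝ → ℝ := fun x => (Real.exp (-(a+b)^2/t) * Phi (ξ x)
      + Real.exp (-(a+(-b))^2/t) * Phi (η x)) / (a * Real.sqrt t) with hFdef
  have key := my_integral_Ioo_of_hasDerivAt_of_nonneg (a := 0) (b := t)
      (La := 0) (Lb := Real.sqrt π * Real.exp (-(a+b)^2/t) / (a * Real.sqrt t))
      (F := F)
      (f := fun s => Real.exp (-c/s) * Real.exp (-d/(t-s))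
        / (s * Real.sqrt s * Real.sqrt (t-s))) ht
      ?_ ?_ ?_ ?_ ?_
  · refine ⟨key.1, ?_⟩
    rw [key.2, sub_zero]
    rw [hadef]
    ring
  -- derivative
  · intro x hx
    obtain ⟨hx0, hxt⟩ := hx
    have hxts : 0 < t - x := by linarith
    have hxi := xi_hasDerivAt a b t hx0 hxt
    have heta := xi_hasDerivAt a (-b) t hx0 hxt
    have hPhixi := (Phi_hasDerivAt (ξ x)).comp x hxi
    have hPhieta := (Phi_hasDerivAt (η x)).comp x heta
    have hF : HasDerivAt F
        ((Real.exp (-(a+b)^2/t) * (-Real.exp (-(ξ x)^2) *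
            (-(t*(a*(t-x)+b*x)) / (2 * Real.sqrt t * (x*Real.sqrt x) * ((t-x)*Real.sqrt (t-x)))))
          + Real.exp (-(a+(-b))^2/t) * (-Real.exp (-(η x)^2) *
            (-(t*(a*(t-x)+(-b)*x)) / (2 * Real.sqrt t * (x*Real.sqrt x) * ((t-x)*Real.sqrt (t-x))))))
          / (a * Real.sqrt t)) x := by
      exact ((hPhixi.const_mul _).add (hPhieta.const_mul _)).div_const _
    convert hF using 1
    have E1 : Real.exp (-(a+b)^2/t) * Real.exp (-(ξ x)^2)
        = Real.exp (-c/x) * Real.exp (-d/(t-x)) := by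
      rw [hxidef]
      rw [exp_identity hx0 hxt, ha2, hb2]
    have E2 : Real.exp (-(a+(-b))^2/t) * Real.exp (-(η x)^2)
        = Real.exp (-c/x) * Real.exp (-d/(t-x)) := by
      rw [hetadef]
      rw [exp_identity hx0 hxt, ha2]
      have : (-b)^2 = d := by rw [neg_pow]; simp [hb2]
      rw [this]
    set E := Real.exp (-c/x) * Real.exp (-d/(t-x)) with hEdef
    set D := 2 * Real.sqrt t * (x*Real.sqrt x) * ((t-x)*Real.sqrt (t-x)) with hDdef
    have hsx : 0 < Real.sqrt x := Real.sqrt_pos.mpr hx0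
    have hsxt : 0 < Real.sqrt (t-x) := Real.sqrt_pos.mpr hxts
    have hDpos : 0 < D := by rw [hDdef]; positivity
    have T1 : Real.exp (-(a+b)^2/t) * (-Real.exp (-(ξ x)^2) *
        (-(t*(a*(t-x)+b*x)) / D)) = E * (t*(a*(t-x)+b*x)) / D := by
      rw [← E1]; ring
    have T2 : Real.exp (-(a+(-b))^2/t) * (-Real.exp (-(η x)^2) *
        (-(t*(a*(t-x)+(-b)*x)) / D)) = E * (t*(a*(t-x)+(-b)*x)) / D := by
      rw [← E2]; ring
    rw [T1, T2, ← add_div, div_div]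
    rw [div_eq_div_iff (by positivity) (by positivity)]
    ring_nf
    rw [hDdef]; ring_nf; rw [Real.sq_sqrt ht.le]
    ring
  -- continuity
  · apply ContinuousOn.div
    · apply ContinuousOn.mul
      · apply Real.continuous_exp.comp_continuousOn
        apply ContinuousOn.div continuousOn_const continuousOn_id
        intro x hx; exact ne_of_gt hx.1
      · apply Real.continuous_exp.comp_continuousOn
        apply ContinuousOn.div continuousOn_const (continuousOn_const.sub continuousOn_id)
        intro x hx
        have : (0:ℝ) < t - x := by have := hx.2; simp only [Set.mem_Ioo] at hx; linarith [hx.2]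
        exact ne_of_gt this
    · exact (continuousOn_id.mul (Real.continuous_sqrt.comp_continuousOn continuousOn_id)).mul
        (Real.continuous_sqrt.comp_continuousOn (continuousOn_const.sub continuousOn_id))
    · intro x hx
      have hx0 : (0:ℝ) < x := hx.1
      have hxts : 0 < t - x := by have := hx.2; simpa using sub_pos.mpr this
      positivity
  -- nonneg
  · intro x hx
    have hx0 : (0:ℝ) < x := hx.1
    exact div_nonneg (by positivity) (by positivity)
  -- limit at 0
  · have hmem : ∀ᶠ x in nhdsWithin (0:ℝ) (Set.Ioo 0 t), x ∈ Set.Ioo (0:ℝ) t :=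
      eventually_mem_nhdsWithin
    have hDinv : Tendsto (fun x => (Real.sqrt t * Real.sqrt x * Real.sqrt (t-x))⁻¹)
        (nhdsWithin (0:ℝ) (Set.Ioo 0 t)) atTop := by
      apply Tendsto.inv_tendsto_nhdsGT_zero
      rw [tendsto_nhdsWithin_iff]
      constructor
      · have hcont : Continuous (fun x : ℝ => Real.sqrt t * Real.sqrt x * Real.sqrt (t-x)) := by
          fun_prop
        have := (hcont.tendsto 0).mono_left
          (nhdsWithin_le_nhds (s := Set.Ioo (0:ℝ) t))
        simpa using this
      · filter_upwards [hmem] with x hx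
        have hx0 : (0:ℝ) < x := hx.1
        have hxts : 0 < t - x := by have := hx.2; linarith
        exact Set.mem_Ioi.mpr (by positivity)
    have hxiTop : Tendsto ξ (nhdsWithin (0:ℝ) (Set.Ioo 0 t)) atTop := by
      have hN : Tendsto (fun x => a*(t-x) - b*x) (nhdsWithin (0:ℝ) (Set.Ioo 0 t))
          (nhds (a*t)) := by
        have hcont : Continuous (fun x : ℝ => a*(t-x) - b*x) := by fun_prop
        have := (hcont.tendsto 0).mono_left (nhdsWithin_le_nhds (s := Set.Ioo (0:ℝ) t))
        simpa using this
      have := hN.pos_mul_atTop (mul_pos ha ht) hDinv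
      simpa [hxidef, div_eq_mul_inv] using this
    have hetaTop : Tendsto η (nhdsWithin (0:ℝ) (Set.Ioo 0 t)) atTop := by
      have hN : Tendsto (fun x => a*(t-x) - (-b)*x) (nhdsWithin (0:ℝ) (Set.Ioo 0 t))
          (nhds (a*t)) := by
        have hcont : Continuous (fun x : ℝ => a*(t-x) - (-b)*x) := by fun_prop
        have := (hcont.tendsto 0).mono_left (nhdsWithin_le_nhds (s := Set.Ioo (0:ℝ) t))
        simpa using this
      have := hN.pos_mul_atTop (mul_pos ha ht) hDinv
      simpa [hetadef, div_eq_mul_inv] using this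
    have := ((tendsto_const_nhds (x := Real.exp (-(a+b)^2/t))).mul
        (Phi_tendsto_atTop.comp hxiTop)).add
        ((tendsto_const_nhds (x := Real.exp (-(a+(-b))^2/t))).mul
        (Phi_tendsto_atTop.comp hetaTop)) |>.div_const (a * Real.sqrt t)
    simpa using this
  -- limit at t
  · have hmem : ∀ᶠ x in nhdsWithin t (Set.Ioo 0 t), x ∈ Set.Ioo (0:ℝ) t :=
      eventually_mem_nhdsWithin
    have hDinv : Tendsto (fun x => (Real.sqrt t * Real.sqrt x * Real.sqrt (t-x))⁻¹)
        (nhdsWithin t (Set.Ioo 0 t)) atTop := by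
      apply Tendsto.inv_tendsto_nhdsGT_zero
      rw [tendsto_nhdsWithin_iff]
      constructor
      · have hcont : Continuous (fun x : ℝ => Real.sqrt t * Real.sqrt x * Real.sqrt (t-x)) := by
          fun_prop
        have := (hcont.tendsto t).mono_left
          (nhdsWithin_le_nhds (s := Set.Ioo (0:ℝ) t))
        simpa using this
      · filter_upwards [hmem] with x hx
        have hx0 : (0:ℝ) < x := hx.1
        have hxts : 0 < t - x := by have := hx.2; linarith
        exact Set.mem_Ioi.mpr (by positivity)
    have hxiBot : Tendsto ξ (nhdsWithin t (Set.Ioo 0 t)) atBot := by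
      have hN : Tendsto (fun x => a*(t-x) - b*x) (nhdsWithin t (Set.Ioo 0 t))
          (nhds (-(b*t))) := by
        have hcont : Continuous (fun x : ℝ => a*(t-x) - b*x) := by fun_prop
        have := (hcont.tendsto t).mono_left (nhdsWithin_le_nhds (s := Set.Ioo (0:ℝ) t))
        simp only [sub_self, mul_zero, zero_sub] at this
        simpa using this
      have := hN.neg_mul_atTop (neg_lt_zero.mpr (mul_pos hb ht)) hDinv
      simpa [hxidef, div_eq_mul_inv] using this
    have hetaTop : Tendsto η (nhdsWithin t (Set.Ioo 0 t)) atTop := by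
      have hN : Tendsto (fun x => a*(t-x) - (-b)*x) (nhdsWithin t (Set.Ioo 0 t))
          (nhds (b*t)) := by
        have hcont : Continuous (fun x : ℝ => a*(t-x) - (-b)*x) := by fun_prop
        have := (hcont.tendsto t).mono_left (nhdsWithin_le_nhds (s := Set.Ioo (0:ℝ) t))
        simp only [sub_self, mul_zero, zero_sub] at this
        simpa using this
      have := hN.pos_mul_atTop (mul_pos hb ht) hDinv
      simpa [hetadef, div_eq_mul_inv] using this
    have hlim := ((tendsto_const_nhds (x := Real.exp (-(a+b)^2/t))).mul
        (Phi_tendsto_atBot.comp hxiBot)).add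
        ((tendsto_const_nhds (x := Real.exp (-(a+(-b))^2/t))).mul
        (Phi_tendsto_atTop.comp hetaTop)) |>.div_const (a * Real.sqrt t)
    have heq : (Real.exp (-(a+b)^2/t) * Real.sqrt π + Real.exp (-(a+(-b))^2/t) * 0)
        / (a * Real.sqrt t) = Real.sqrt π * Real.exp (-(a+b)^2/t) / (a * Real.sqrt t) := by
      ring
    rw [← heq]
    exact hlim

lemma sqrt_tendsto_atTop : Tendsto Real.sqrt atTop atTop := by
  rw [tendsto_atTop_atTop]
  intro b
  refine ⟨(max b 0)^2, fun a ha => ?_⟩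
  have h1 : Real.sqrt ((max b 0)^2) ≤ Real.sqrt a := Real.sqrt_le_sqrt ha
  rw [Real.sqrt_sq (le_max_right b 0)] at h1
  exact le_trans (le_max_left b 0) h1

lemma inner_integral {s cc : ℝ} (hs : 0 < s) :
    IntegrableOn (fun x => Real.exp (-x/s)) (Set.Ioi cc) ∧
    (∫ x in Set.Ioi cc, Real.exp (-x/s)) = s * Real.exp (-cc/s) := by
  have hderiv : ∀ x ∈ Set.Ici cc, HasDerivAt (fun x => -(s * Real.exp (-x/s)))
      (Real.exp (-x/s)) x := by
    intro x _
    have h1 : HasDerivAt (fun x : ℝ => -x/s) (-(1/s)) x := by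
      have := ((hasDerivAt_id x).div_const s).neg
      exact this.congr_of_eventuallyEq (Eventually.of_forall fun y => by simp only [id_eq, Pi.neg_apply]; ring)
    have h2 := (h1.exp.const_mul s).neg
    refine h2.congr_deriv ?_
    field_simp
  have hnn : ∀ x ∈ Set.Ioi cc, 0 ≤ Real.exp (-x/s) := fun x _ => (Real.exp_pos _).le
  have htend : Tendsto (fun x => -(s * Real.exp (-x/s))) atTop (nhds 0) := by
    have h1 : Tendsto (fun x : ℝ => -x/s) atTop atBot := by
      have : Tendsto (fun x : ℝ => x/s) atTop atTop := tendsto_id.atTop_div_const hs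
      have := tendsto_neg_atTop_atBot.comp this
      convert this using 2 with x
      simp [Function.comp, neg_div]
    have := ((Real.tendsto_exp_atBot.comp h1).const_mul s).neg
    simpa using this
  refine ⟨integrableOn_Ioi_deriv_of_nonneg' hderiv hnn htend, ?_⟩
  rw [integral_Ioi_of_hasDerivAt_of_nonneg' hderiv hnn htend]
  simp

lemma outer_integral {c d t : ℝ} (hc : 0 < c) (hd : 0 < d) (ht : 0 < t) :
    IntegrableOn (fun x => Real.sqrt π / (Real.sqrt x * Real.sqrt t)
        * Real.exp (-(Real.sqrt x + Real.sqrt d)^2/t)) (Set.Ioi c) ∧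
    (∫ x in Set.Ioi c, Real.sqrt π / (Real.sqrt x * Real.sqrt t)
        * Real.exp (-(Real.sqrt x + Real.sqrt d)^2/t))
      = 2 * Real.sqrt π * Phi ((Real.sqrt c + Real.sqrt d)/Real.sqrt t) := by
  have hrt : 0 < Real.sqrt t := Real.sqrt_pos.mpr ht
  have hderiv : ∀ x ∈ Set.Ici c, HasDerivAt
      (fun x => -(2 * Real.sqrt π * Phi ((Real.sqrt x + Real.sqrt d)/Real.sqrt t)))
      (Real.sqrt π / (Real.sqrt x * Real.sqrt t)
        * Real.exp (-(Real.sqrt x + Real.sqrt d)^2/t)) x := by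
    intro x hx
    have hx0 : 0 < x := lt_of_lt_of_le hc hx
    have hsx : 0 < Real.sqrt x := Real.sqrt_pos.mpr hx0
    have hz : HasDerivAt (fun x => (Real.sqrt x + Real.sqrt d)/Real.sqrt t)
        ((1/(2*Real.sqrt x))/Real.sqrt t) x :=
      ((Real.hasDerivAt_sqrt hx0.ne').add_const _).div_const _
    have hPhi := (Phi_hasDerivAt ((Real.sqrt x + Real.sqrt d)/Real.sqrt t)).comp x hz
    have h2 := (hPhi.const_mul (2 * Real.sqrt π)).neg
    refine h2.congr_deriv ?_
    have hzsq : (((Real.sqrt x + Real.sqrt d)/Real.sqrt t))^2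
        = (Real.sqrt x + Real.sqrt d)^2/t := by
      rw [div_pow, Real.sq_sqrt ht.le]
    rw [hzsq]
    field_simp
  have hnn : ∀ x ∈ Set.Ioi c, 0 ≤ Real.sqrt π / (Real.sqrt x * Real.sqrt t)
      * Real.exp (-(Real.sqrt x + Real.sqrt d)^2/t) := fun x _ => by positivity
  have htend : Tendsto (fun x => -(2 * Real.sqrt π
      * Phi ((Real.sqrt x + Real.sqrt d)/Real.sqrt t))) atTop (nhds 0) := by
    have hz : Tendsto (fun x => (Real.sqrt x + Real.sqrt d)/Real.sqrt t) atTop atTop :=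
      ((tendsto_atTop_add_const_right _ _ sqrt_tendsto_atTop)).atTop_div_const hrt
    have := ((Phi_tendsto_atTop.comp hz).const_mul (2 * Real.sqrt π)).neg
    simpa using this
  refine ⟨integrableOn_Ioi_deriv_of_nonneg' hderiv hnn htend, ?_⟩
  rw [integral_Ioi_of_hasDerivAt_of_nonneg' hderiv hnn htend]
  simp [Phi]

set_option maxHeartbeats 1000000 in
theorem bessel_lemma2_integral (c d t : ℝ) (hc : 0 < c) (hd : 0 < d) (ht : 0 < t) :
    ∫ s in Set.Ioo (0:ℝ) t,
        s ^ (-(1:ℝ)/2) * (t - s) ^ (-(1:ℝ)/2) * Real.exp (-c/s) * Real.exp (-d/(t-s))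
      = 2 * Real.sqrt π *
        ∫ u in Set.Ioi ((Real.sqrt c + Real.sqrt d) / Real.sqrt t), Real.exp (-u^2) := by
  set f₁ : ℝ → ℝ := fun s => Real.exp (-c/s) * Real.exp (-d/(t-s))
      / (Real.sqrt s * Real.sqrt (t-s)) with hf₁def
  set g : ℝ → ℝ → ℝ := fun x s => Real.exp (-x/s) * Real.exp (-d/(t-s))
      / (s * Real.sqrt s * Real.sqrt (t-s)) with hgdef
  set A : ℝ → ℝ := fun x => Real.sqrt π / (Real.sqrt x * Real.sqrt t)
      * Real.exp (-(Real.sqrt x + Real.sqrt d)^2/t) with hAdef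
  -- step 0: rewrite integrand
  have hstep0 : ∫ s in Set.Ioo (0:ℝ) t,
      s ^ (-(1:ℝ)/2) * (t - s) ^ (-(1:ℝ)/2) * Real.exp (-c/s) * Real.exp (-d/(t-s))
      = ∫ s in Set.Ioo (0:ℝ) t, f₁ s := by
    refine MeasureTheory.setIntegral_congr_fun measurableSet_Ioo (fun s hs => ?_)
    have hs0 : (0:ℝ) < s := hs.1
    have hts : 0 < t - s := by have := hs.2; linarith
    have hpow : ∀ y : ℝ, 0 < y → y ^ (-(1:ℝ)/2) = (Real.sqrt y)⁻¹ := by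
      intro y hy
      rw [show (-(1:ℝ)/2) = -(1/2 : ℝ) by norm_num, Real.rpow_neg hy.le,
        Real.sqrt_eq_rpow]
    rw [hpow s hs0, hpow (t-s) hts, hf₁def]
    field_simp
  rw [hstep0]
  -- nonnegativity facts
  have hden : ∀ s : ℝ, 0 ≤ s * Real.sqrt s := by
    intro s
    rcases le_or_gt s 0 with h|h
    · rw [Real.sqrt_eq_zero_of_nonpos h, mul_zero]
    · positivity
  have hf₁nn : ∀ s, 0 ≤ f₁ s := fun s => div_nonneg (by positivity)
    (mul_nonneg (Real.sqrt_nonneg _) (Real.sqrt_nonneg _))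
  have hgnn : ∀ x s, 0 ≤ g x s := fun x s => div_nonneg (by positivity)
    (mul_nonneg (hden s) (Real.sqrt_nonneg _))
  have hAnn : ∀ x, 0 ≤ A x := fun x => by rw [hAdef]; positivity
  -- measurability facts
  have hgmeas : Measurable (fun p : ℝ × ℝ => g p.1 p.2) := by
    rw [hgdef]
    fun_prop
  have hf₁meas : Measurable f₁ := by rw [hf₁def]; fun_prop
  -- lintegral chain
  have key : ∫⁻ s in Set.Ioo (0:ℝ) t, ENNReal.ofReal (f₁ s)
      = ENNReal.ofReal (2 * Real.sqrt π
          * Phi ((Real.sqrt c + Real.sqrt d)/Real.sqrt t)) := by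
    have h1 : ∫⁻ s in Set.Ioo (0:ℝ) t, ENNReal.ofReal (f₁ s)
        = ∫⁻ s in Set.Ioo (0:ℝ) t, ∫⁻ x in Set.Ioi c, ENNReal.ofReal (g x s) := by
      refine MeasureTheory.setLIntegral_congr_fun measurableSet_Ioo
        (fun s hs => ?_)
      have hs0 : (0:ℝ) < s := hs.1
      have hts : 0 < t - s := by have := hs.2; linarith
      have hval : f₁ s = ∫ x in Set.Ioi c, g x s := by
        have : (∫ x in Set.Ioi c, g x s)
            = (∫ x in Set.Ioi c, Real.exp (-x/s))
              * (Real.exp (-d/(t-s)) / (s * Real.sqrt s * Real.sqrt (t-s))) := by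
          rw [← MeasureTheory.integral_mul_const]
          refine MeasureTheory.setIntegral_congr_fun measurableSet_Ioi (fun x _ => ?_)
          rw [hgdef]; ring
        rw [this, (inner_integral hs0).2, hf₁def]
        field_simp
      rw [hval]
      have hint : IntegrableOn (fun x => g x s) (Set.Ioi c) := by
        refine ((inner_integral hs0).1.mul_const
          (Real.exp (-d/(t-s)) / (s * Real.sqrt s * Real.sqrt (t-s)))).congr
          (Filter.Eventually.of_forall (fun x => ?_))
        rw [hgdef]
        ring
      exact MeasureTheory.ofReal_integral_eq_lintegral_ofReal hint
        (Filter.Eventually.of_forall (fun x => hgnn x s))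
    rw [h1]
    have h2 : ∫⁻ s in Set.Ioo (0:ℝ) t, ∫⁻ x in Set.Ioi c, ENNReal.ofReal (g x s)
        = ∫⁻ x in Set.Ioi c, ∫⁻ s in Set.Ioo (0:ℝ) t, ENNReal.ofReal (g x s) := by
      exact MeasureTheory.lintegral_lintegral_swap
        ((ENNReal.measurable_ofReal.comp (hgmeas.comp measurable_swap)).aemeasurable)
    rw [h2]
    have h3 : ∫⁻ x in Set.Ioi c, ∫⁻ s in Set.Ioo (0:ℝ) t, ENNReal.ofReal (g x s)
        = ∫⁻ x in Set.Ioi c, ENNReal.ofReal (A x) := by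
      refine MeasureTheory.setLIntegral_congr_fun measurableSet_Ioi
        (fun x hx => ?_)
      have hx0 : 0 < x := lt_trans hc hx
      have hlem := lemA hx0 hd ht
      rw [← MeasureTheory.ofReal_integral_eq_lintegral_ofReal hlem.1
        (Filter.Eventually.of_forall (fun s => hgnn x s))]
      rw [hlem.2, hAdef]
    rw [h3]
    have h4 : ∫⁻ x in Set.Ioi c, ENNReal.ofReal (A x)
        = ENNReal.ofReal (∫ x in Set.Ioi c, A x) := by
      rw [MeasureTheory.ofReal_integral_eq_lintegral_ofReal (outer_integral hc hd ht).1
        (Filter.Eventually.of_forall hAnn)]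
    rw [h4, (outer_integral hc hd ht).2]
  have hfinal : ∫ s in Set.Ioo (0:ℝ) t, f₁ s
      = 2 * Real.sqrt π * Phi ((Real.sqrt c + Real.sqrt d)/Real.sqrt t) := by
    rw [MeasureTheory.integral_eq_lintegral_of_nonneg_ae
        (Filter.Eventually.of_forall hf₁nn)
        (hf₁meas.aestronglyMeasurable), key, ENNReal.toReal_ofReal]
    exact mul_nonneg (by positivity) (Phi_nonneg _)
  rw [hfinal, Phi]
end

section
/- For all real numbers x > 1, y > 1 and t > 0, one has exp(−(x+y−2)²/(2t)) ≤ (t/(2(x−1)(y−1))) · [ exp(−(x−y)²/(2t)) − exp(−(x+y−2)²/(2t)) ]. -/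
open Real

theorem bessel_lemma3_boundb (x y t : ℝ) (hx : 1 < x) (hy : 1 < y) (ht : 0 < t) :
    Real.exp (-(x + y - 2)^2 / (2*t))
      ≤ (t / (2 * (x - 1) * (y - 1))) *
        (Real.exp (-(x - y)^2 / (2*t)) - Real.exp (-(x + y - 2)^2 / (2*t))) := by
  have hc : 0 < 2 * (x - 1) * (y - 1) := by nlinarith
  set z : ℝ := (2 * (x - 1) * (y - 1)) / t with hz
  have hzpos : 0 < z := div_pos hc ht
  have hsplit : (-(x - y)^2 / (2*t)) = (-(x + y - 2)^2 / (2*t)) + z := by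
    rw [hz]
    field_simp [hz]
    ring
  have hE : Real.exp (-(x - y)^2 / (2*t))
      = Real.exp (-(x + y - 2)^2 / (2*t)) * Real.exp z := by
    rw [hsplit, Real.exp_add]
  have hexpz : z + 1 ≤ Real.exp z := Real.add_one_le_exp z
  have hA : 0 < Real.exp (-(x + y - 2)^2 / (2*t)) := Real.exp_pos _
  rw [hE]
  have key : Real.exp (-(x + y - 2)^2 / (2*t)) * z
      ≤ Real.exp (-(x + y - 2)^2 / (2*t)) * (Real.exp z - 1) := by
    apply mul_le_mul_of_nonneg_left (by linarith) hA.le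
  have hzval : (t / (2 * (x - 1) * (y - 1))) * z = 1 := by
    rw [hz]
    have hne : (x - 1) * (y - 1) ≠ 0 := by nlinarith
    field_simp [hz]
    exact div_self hne
  calc Real.exp (-(x + y - 2)^2 / (2*t))
      = (t / (2 * (x - 1) * (y - 1))) * (Real.exp (-(x + y - 2)^2 / (2*t)) * z) := by
        rw [show (t / (2 * (x - 1) * (y - 1))) * (Real.exp (-(x + y - 2)^2 / (2*t)) * z)
          = ((t / (2 * (x - 1) * (y - 1))) * z) * Real.exp (-(x + y - 2)^2 / (2*t)) by ring,
          hzval, one_mul]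
    _ ≤ (t / (2 * (x - 1) * (y - 1))) * (Real.exp (-(x + y - 2)^2 / (2*t)) * (Real.exp z - 1)) := by
        apply mul_le_mul_of_nonneg_left key (by positivity)
    _ = (t / (2 * (x - 1) * (y - 1))) *
        (Real.exp (-(x + y - 2)^2 / (2*t)) * Real.exp z - Real.exp (-(x + y - 2)^2 / (2*t))) := by
        ring
end

section
/- For all real numbers c > 0 and d > 0, the improper integral ∫₀^∞ w^(−1/2) exp(−c·w) exp(−d/w) dw equals √(π/c) · exp(−2√(c·d)). -/
open MeasureTheory Real

lemma key_gaussian_shift (a b : ℝ) (ha : 0 < a) (hb : 0 < b) :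
    ∫ u in Set.Ioi (0:ℝ), Real.exp (-(a*u - b/u)^2)
      = Real.sqrt π / (2*a) := by
  set f : ℝ → ℝ := fun u => a*u - b/u with hf_def
  set g : ℝ → ℝ := fun t => Real.exp (-t^2) with hg_def
  -- derivative of f
  have hderiv : ∀ u ∈ Set.Ioi (0:ℝ), HasDerivWithinAt f (a + b/u^2) (Set.Ioi (0:ℝ)) u := by
    intro u hu
    have hu0 : u ≠ 0 := ne_of_gt hu
    have h1 : HasDerivAt (fun u : ℝ => a * u - b * u⁻¹) (a * 1 - b * (-(u^2)⁻¹)) u :=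
      ((hasDerivAt_id u).const_mul a).sub ((hasDerivAt_inv hu0).const_mul b)
    have heq : (fun u : ℝ => a * u - b * u⁻¹) = f := by
      funext v; simp only [hf_def]; rw [div_eq_mul_inv]
    rw [heq] at h1
    have hval : a * 1 - b * (-(u^2)⁻¹) = a + b/u^2 := by field_simp; ring
    rw [hval] at h1
    exact h1.hasDerivWithinAt
  -- strict monotonicity / injectivity
  have hmono : StrictMonoOn f (Set.Ioi (0:ℝ)) := by
    intro x hx y hy hxy
    have hx0 : (0:ℝ) < x := hx
    have h1 : b / y < b / x := div_lt_div_of_pos_left hb hx0 hxy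
    have h2 : a * x < a * y := by nlinarith
    simp only [hf_def]
    linarith
  have hinj : Set.InjOn f (Set.Ioi (0:ℝ)) := hmono.injOn
  -- image is univ
  have himg : f '' Set.Ioi (0:ℝ) = Set.univ := by
    apply Set.eq_univ_of_forall
    intro t
    set s := Real.sqrt (t^2 + 4*a*b) with hs_def
    have hs_pos : |t| < s := by
      rw [hs_def, ← Real.sqrt_sq_eq_abs]
      exact Real.sqrt_lt_sqrt (sq_nonneg t) (by nlinarith)
    have hs_sq : s^2 = t^2 + 4*a*b := Real.sq_sqrt (by nlinarith [sq_nonneg t])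
    set u := (t + s) / (2*a) with hu_def
    have hu_pos : 0 < u := by
      apply div_pos _ (by linarith)
      have := neg_abs_le t
      linarith
    refine ⟨u, hu_pos, ?_⟩
    have hquad : a * u^2 - t * u - b = 0 := by
      rw [hu_def]
      field_simp
      nlinarith [hs_sq]
    have : b / u = a * u - t := by
      field_simp
      nlinarith [hquad]
    simp only [hf_def, this]
    ring
  -- continuity on Ioi 0
  have hcont : ContinuousOn (fun u => g (f u)) (Set.Ioi (0:ℝ)) := by
    apply Real.continuous_exp.comp_continuousOn
    apply ContinuousOn.neg
    apply ContinuousOn.pow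
    exact (continuousOn_const.mul continuousOn_id).sub
      (continuousOn_const.div continuousOn_id (fun x hx => ne_of_gt hx))
  -- integrability of g ∘ f on Ioi 0
  have hint_gf : IntegrableOn (fun u => g (f u)) (Set.Ioi (0:ℝ)) := by
    have hbound : ∀ u ∈ Set.Ioi (0:ℝ), ‖g (f u)‖ ≤ Real.exp (2*a*b) * Real.exp (-(a^2) * u^2) := by
      intro u hu
      have hu0 : (0:ℝ) < u := hu
      simp only [hg_def, Real.norm_eq_abs, abs_of_pos (Real.exp_pos _), ← Real.exp_add]
      apply Real.exp_le_exp.2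
      have h1 : (f u)^2 = a^2*u^2 - 2*a*b + (b/u)^2 := by
        simp only [hf_def]
        field_simp
        ring
      have h2 : -(f u^2) ≤ 2*a*b - a^2*u^2 := by
        rw [h1]; nlinarith [sq_nonneg (b/u)]
      linarith
    apply Integrable.mono' ((integrable_exp_neg_mul_sq (by positivity : (0:ℝ) < a^2)).const_mul
      (Real.exp (2*a*b))).restrict
    · exact hcont.aestronglyMeasurable measurableSet_Ioi
    · exact (ae_restrict_iff' measurableSet_Ioi).2 (Filter.Eventually.of_forall hbound)
  -- main change of variables: ∫_ℝ e^{-t²} = ∫_{Ioi 0} (a + b/u²) e^{-f(u)²}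
  have hcov : ∫ t : ℝ, g t = ∫ u in Set.Ioi (0:ℝ), (a + b/u^2) * g (f u) := by
    rw [← setIntegral_univ, ← himg,
      integral_image_eq_integral_abs_deriv_smul measurableSet_Ioi hderiv hinj g]
    apply setIntegral_congr_fun measurableSet_Ioi
    intro u hu
    have hu0 : (0:ℝ) < u := hu
    simp only [smul_eq_mul]
    rw [abs_of_pos (by positivity)]
  -- integrability of the full integrand
  have hint_full : IntegrableOn (fun u => (a + b/u^2) * g (f u)) (Set.Ioi (0:ℝ)) := by
    have := (integrableOn_image_iff_integrableOn_abs_deriv_smul measurableSet_Ioi hderiv hinj g).1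
      (by rw [himg]
          have hg : Integrable g := by
            have h := integrable_exp_neg_mul_sq (one_pos : (0:ℝ) < 1)
            simp only [neg_mul, one_mul] at h
            exact h
          exact hg.integrableOn)
    apply this.congr_fun _ measurableSet_Ioi
    intro u hu
    have hu0 : (0:ℝ) < u := hu
    simp only [smul_eq_mul]
    rw [abs_of_pos (by positivity)]
  -- second substitution: u ↦ b/(a*u)
  have hderiv2 : ∀ u ∈ Set.Ioi (0:ℝ),
      HasDerivWithinAt (fun u => b/(a*u)) (-(b/a)/u^2) (Set.Ioi (0:ℝ)) u := by
    intro u hu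
    have hu0 : u ≠ 0 := ne_of_gt hu
    have h1 : HasDerivAt (fun u : ℝ => (b/a) * u⁻¹) ((b/a) * (-(u^2)⁻¹)) u :=
      (hasDerivAt_inv hu0).const_mul (b/a)
    have heq : (fun u : ℝ => (b/a) * u⁻¹) = fun u => b/(a*u) := by
      funext v; field_simp
    rw [heq] at h1
    have hval : (b/a) * (-(u^2)⁻¹) = -(b/a)/u^2 := by field_simp
    rw [hval] at h1
    exact h1.hasDerivWithinAt
  have hinj2 : Set.InjOn (fun u => b/(a*u)) (Set.Ioi (0:ℝ)) := by
    intro x hx y hy hxy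
    have hx0 : (0:ℝ) < x := hx
    have hy0 : (0:ℝ) < y := hy
    have hxy' : b * (a*y) = b * (a*x) := by
      rw [div_eq_div_iff (by positivity) (by positivity)] at hxy; exact hxy
    have h2 := mul_left_cancel₀ (ne_of_gt hb) hxy'
    exact (mul_left_cancel₀ (ne_of_gt ha) h2).symm
  have himg2 : (fun u => b/(a*u)) '' Set.Ioi (0:ℝ) = Set.Ioi (0:ℝ) := by
    ext t
    constructor
    · rintro ⟨u, hu, rfl⟩
      have hu0 : (0:ℝ) < u := hu
      exact div_pos hb (by positivity)
    · intro ht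
      have ht0 : (0:ℝ) < t := ht
      exact ⟨b/(a*t), div_pos hb (by positivity), by field_simp⟩
  -- second change of variable
  have hcov2 : ∫ u in Set.Ioi (0:ℝ), g (f u)
      = ∫ u in Set.Ioi (0:ℝ), ((b/a)/u^2) * g (f u) := by
    conv_lhs => rw [← himg2]
    rw [integral_image_eq_integral_abs_deriv_smul measurableSet_Ioi hderiv2 hinj2
      (fun u => g (f u))]
    apply setIntegral_congr_fun measurableSet_Ioi
    intro u hu
    have hu0 : (0:ℝ) < u := hu
    simp only [smul_eq_mul]
    have habs : |(-(b/a)/u^2)| = (b/a)/u^2 := by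
      rw [abs_div, abs_neg, abs_of_pos (by positivity : (0:ℝ) < b/a),
        abs_of_pos (by positivity : (0:ℝ) < u^2)]
    rw [habs]
    congr 1
    simp only [hf_def, hg_def]
    congr 1
    have : a * (b / (a * u)) - b / (b / (a * u)) = -(a*u - b/u) := by
      field_simp
      ring
    rw [this]
    ring
  -- gaussian value
  have hgauss : ∫ t : ℝ, g t = Real.sqrt π := by
    have h := integral_gaussian (1:ℝ)
    simp only [neg_mul, one_mul, div_one] at h
    exact h
  -- split and combine
  set I := ∫ u in Set.Ioi (0:ℝ), g (f u) with hI_def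
  have hint2 : IntegrableOn (fun u => a * (((b/a)/u^2) * g (f u))) (Set.Ioi (0:ℝ)) := by
    have hsub : IntegrableOn (fun u => (a + b/u^2) * g (f u) - a * g (f u)) (Set.Ioi (0:ℝ)) :=
      hint_full.sub (hint_gf.const_mul a)
    apply hsub.congr_fun _ measurableSet_Ioi
    intro u hu
    have hu0 : (0:ℝ) < u := hu
    field_simp
    ring
  have hkey : Real.sqrt π = 2 * a * I := by
    rw [← hgauss, hcov]
    have hsplit : ∫ u in Set.Ioi (0:ℝ), (a + b/u^2) * g (f u)
        = ∫ u in Set.Ioi (0:ℝ), (a * g (f u) + a * (((b/a)/u^2) * g (f u))) := by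
      apply setIntegral_congr_fun measurableSet_Ioi
      intro u hu
      have hu0 : (0:ℝ) < u := hu
      field_simp
    rw [hsplit, integral_add (hint_gf.const_mul a) hint2, integral_const_mul, integral_const_mul,
      ← hcov2]
    ring
  have h2a : (2*a) ≠ 0 := by positivity
  field_simp at hkey ⊢
  linarith [hkey]

theorem bessel_gr_formula (c d : ℝ) (hc : 0 < c) (hd : 0 < d) :
    ∫ w in Set.Ioi (0:ℝ), w ^ (-(1:ℝ)/2) * Real.exp (-c*w) * Real.exp (-d/w)
      = Real.sqrt (π / c) * Real.exp (-2 * Real.sqrt (c*d)) := by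
  set a := Real.sqrt c with ha_def
  set b := Real.sqrt d with hb_def
  have ha : 0 < a := Real.sqrt_pos.2 hc
  have hb : 0 < b := Real.sqrt_pos.2 hd
  have ha2 : a^2 = c := Real.sq_sqrt hc.le
  have hb2 : b^2 = d := Real.sq_sqrt hd.le
  -- substitution w = u^2
  have hderiv : ∀ u ∈ Set.Ioi (0:ℝ),
      HasDerivWithinAt (fun u : ℝ => u^2) (2*u) (Set.Ioi (0:ℝ)) u := by
    intro u hu
    simpa [mul_comm] using (hasDerivAt_pow 2 u).hasDerivWithinAt
  have hinj : Set.InjOn (fun u : ℝ => u^2) (Set.Ioi (0:ℝ)) := by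
    intro x hx y hy hxy
    have hx0 : (0:ℝ) < x := hx
    have hy0 : (0:ℝ) < y := hy
    have h : x^2 = y^2 := hxy
    calc x = Real.sqrt (x^2) := (Real.sqrt_sq hx0.le).symm
    _ = Real.sqrt (y^2) := by rw [h]
    _ = y := Real.sqrt_sq hy0.le
  have himg : (fun u : ℝ => u^2) '' Set.Ioi (0:ℝ) = Set.Ioi (0:ℝ) := by
    ext t
    constructor
    · rintro ⟨u, hu, rfl⟩
      have hu0 : (0:ℝ) < u := hu
      exact pow_pos hu0 2
    · intro ht
      have ht0 : (0:ℝ) < t := ht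
      exact ⟨Real.sqrt t, Real.sqrt_pos.2 ht0, Real.sq_sqrt ht0.le⟩
  have hcov := integral_image_eq_integral_abs_deriv_smul measurableSet_Ioi hderiv hinj
    (fun w => w ^ (-(1:ℝ)/2) * Real.exp (-c*w) * Real.exp (-d/w))
  rw [himg] at hcov
  rw [hcov]
  have hstep : ∀ u ∈ Set.Ioi (0:ℝ),
      |2*u| • ((u^2) ^ (-(1:ℝ)/2) * Real.exp (-c*(u^2)) * Real.exp (-d/(u^2)))
        = (2 * Real.exp (-(2*a*b))) * Real.exp (-(a*u - b/u)^2) := by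
    intro u hu
    have hu0 : (0:ℝ) < u := hu
    have hrpow : (u^2 : ℝ) ^ (-(1:ℝ)/2) = u⁻¹ := by
      rw [← Real.rpow_natCast u 2, ← Real.rpow_mul hu0.le]
      norm_num
      exact Real.rpow_neg_one u
    have hexp : -c*(u^2) + -d/(u^2) = -(a*u - b/u)^2 + -(2*a*b) := by
      field_simp
      linear_combination u^2*u^2*ha2 + hb2
    rw [smul_eq_mul, abs_of_pos (by positivity), hrpow]
    have hmul : Real.exp (-c*(u^2)) * Real.exp (-d/(u^2))
        = Real.exp (-(a*u - b/u)^2) * Real.exp (-(2*a*b)) := by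
      rw [← Real.exp_add, ← Real.exp_add, hexp]
    have huu : u * u⁻¹ = 1 := mul_inv_cancel₀ (ne_of_gt hu0)
    calc 2*u * (u⁻¹ * Real.exp (-c*(u^2)) * Real.exp (-d/(u^2)))
        = (u*u⁻¹) * (2 * (Real.exp (-c*(u^2)) * Real.exp (-d/(u^2)))) := by ring
      _ = 2 * (Real.exp (-(a*u-b/u)^2) * Real.exp (-(2*a*b))) := by rw [huu, hmul, one_mul]
      _ = 2 * Real.exp (-(2*a*b)) * Real.exp (-(a*u - b/u)^2) := by ring
  rw [setIntegral_congr_fun measurableSet_Ioi hstep, integral_const_mul,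
    key_gaussian_shift a b ha hb]
  have h1 : Real.sqrt (π/c) = Real.sqrt π / a := by
    rw [ha_def, Real.sqrt_div Real.pi_pos.le]
  have h2 : Real.sqrt (c*d) = a * b := Real.sqrt_mul hc.le d
  rw [h2, h1, show ((-2) * (a*b) : ℝ) = -(2*a*b) from by ring]
  field_simp
end

section
/- For all real numbers c > 0 and d > 0, the improper integral ∫₀^∞ w^(−3/2) exp(−c·w) exp(−d/w) dw equals √(π/d) · exp(−2√(c·d)). -/
open MeasureTheory Real

theorem bessel_gr_formula_neg (c d : ℝ) (hc : 0 < c) (hd : 0 < d) :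
    ∫ w in Set.Ioi (0:ℝ), w ^ (-(3:ℝ)/2) * Real.exp (-c*w) * Real.exp (-d/w)
      = Real.sqrt (π / d) * Real.exp (-2 * Real.sqrt (c*d)) := by
  have ha : (0:ℝ) < Real.sqrt c := Real.sqrt_pos.mpr hc
  have hb : (0:ℝ) < Real.sqrt d := Real.sqrt_pos.mpr hd
  set a := Real.sqrt c with ha_def
  set b := Real.sqrt d with hb_def
  set φ : ℝ → ℝ := fun x => a * x - b / x with hφ_def
  set φ' : ℝ → ℝ := fun x => a + b / x ^ 2 with hφ'_def
  -- derivative of φ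
  have hderiv : ∀ x ∈ Set.Ioi (0:ℝ), HasDerivWithinAt φ (φ' x) (Set.Ioi 0) x := by
    intro x hx
    have hx0 : x ≠ 0 := ne_of_gt hx
    have h1 : HasDerivAt (fun y : ℝ => a * y - b * y⁻¹) (a * 1 - b * (-(x ^ 2)⁻¹)) x :=
      ((hasDerivAt_id x).const_mul a).sub ((hasDerivAt_inv hx0).const_mul b)
    have h2 : a * 1 - b * (-(x ^ 2)⁻¹) = φ' x := by
      simp only [hφ'_def]; field_simp; ring
    rw [h2] at h1
    have h3 : (fun y : ℝ => a * y - b * y⁻¹) = φ := by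
      funext y; simp [hφ_def, div_eq_mul_inv]
    rw [h3] at h1
    exact h1.hasDerivWithinAt
  -- strict monotonicity, hence injectivity
  have hmono : StrictMonoOn φ (Set.Ioi 0) := by
    intro x hx y hy hxy
    have h1 : b / y < b / x := div_lt_div_of_pos_left hb hx hxy
    have h2 : a * x < a * y := by
      have := Set.mem_Ioi.mp hx
      nlinarith
    simp only [hφ_def]
    linarith
  -- continuity
  have hcont : ContinuousOn φ (Set.Ioi 0) := by
    apply ContinuousOn.sub
    · exact (continuous_const.mul continuous_id).continuousOn
    · exact continuousOn_const.div continuousOn_id fun x hx => ne_of_gt hx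
  -- image of φ is all of ℝ
  have himage : φ '' Set.Ioi 0 = Set.univ := by
    apply Set.eq_univ_of_forall
    intro y
    have h1 : Filter.Tendsto (fun x : ℝ => a * x) (nhdsWithin 0 (Set.Ioi 0)) (nhds 0) := by
      have h := ((continuous_mul_left a).tendsto 0).mono_left
        (nhdsWithin_le_nhds (s := Set.Ioi (0:ℝ)))
      simpa using h
    have h2 : Filter.Tendsto (fun x : ℝ => b / x) (nhdsWithin 0 (Set.Ioi 0)) Filter.atTop := by
      simp only [div_eq_mul_inv]
      exact tendsto_inv_nhdsGT_zero.const_mul_atTop hb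
    have h3 : Filter.Tendsto (fun x : ℝ => -(b / x)) (nhdsWithin 0 (Set.Ioi 0)) Filter.atBot :=
      Filter.tendsto_neg_atTop_atBot.comp h2
    have hbot : Filter.Tendsto φ (nhdsWithin 0 (Set.Ioi 0)) Filter.atBot := by
      have h4 : ∀ᶠ x in nhdsWithin 0 (Set.Ioi 0), (fun x : ℝ => a * x) x ≤ 1 :=
        h1.eventually (eventually_le_nhds (by norm_num))
      have := Filter.tendsto_atBot_add_left_of_ge' _ 1 h4 h3
      simpa [hφ_def, sub_eq_add_neg] using this
    have htop : Filter.Tendsto φ Filter.atTop Filter.atTop := by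
      have h5 : Filter.Tendsto (fun x : ℝ => a * x) Filter.atTop Filter.atTop :=
        Filter.tendsto_id.const_mul_atTop ha
      have h6 : Filter.Tendsto (fun x : ℝ => -(b / x)) Filter.atTop (nhds (-0)) :=
        (tendsto_const_nhds.div_atTop Filter.tendsto_id).neg
      have h7 : ∀ᶠ x in Filter.atTop, (-1 : ℝ) ≤ -(b / x) :=
        h6.eventually (eventually_ge_nhds (by norm_num))
      have := Filter.tendsto_atTop_add_right_of_le' _ (-1 : ℝ) h5 h7
      simpa [hφ_def, sub_eq_add_neg] using this
    -- find points below and above y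
    obtain ⟨x₀, hx₀y, hx₀⟩ :=
      ((hbot.eventually (Filter.eventually_le_atBot y)).and self_mem_nhdsWithin).exists
    obtain ⟨x₁, hx₁y, hx₁⟩ :=
      ((htop.eventually (Filter.eventually_ge_atTop y)).and (Filter.eventually_ge_atTop x₀)).exists
    have hIcc : Set.Icc x₀ x₁ ⊆ Set.Ioi 0 := fun z hz => lt_of_lt_of_le hx₀ hz.1
    have := intermediate_value_Icc hx₁ (hcont.mono hIcc)
    exact Set.image_mono hIcc (this ⟨hx₀y, hx₁y⟩)
  -- the gaussian integral
  have hgauss : (∫ x : ℝ, Real.exp (-x ^ 2)) = Real.sqrt π := by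
    have := integral_gaussian 1
    simpa using this
  have hgauss_int : Integrable (fun x : ℝ => Real.exp (-x ^ 2)) := by
    have := integrable_exp_neg_mul_sq (b := 1) one_pos
    simpa using this
  -- change of variables: gaussian = integral over Ioi 0
  have key0 := integral_image_eq_integral_abs_deriv_smul measurableSet_Ioi hderiv
    hmono.injOn (fun u => Real.exp (-u ^ 2))
  rw [himage, Measure.restrict_univ] at key0
  have habs : ∀ x ∈ Set.Ioi (0:ℝ), |φ' x| = φ' x := by
    intro x hx
    have hx' : (0:ℝ) < x := hx
    refine abs_of_pos ?_
    simp only [hφ'_def]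
    positivity
  have key1 : Real.sqrt π
      = ∫ x in Set.Ioi (0:ℝ), φ' x * Real.exp (-(φ x) ^ 2) := by
    rw [← hgauss, key0]
    refine setIntegral_congr_fun measurableSet_Ioi fun x hx => ?_
    rw [smul_eq_mul, habs x hx]
  -- integrability of the transported integrand
  have hint0 : IntegrableOn (fun x => φ' x * Real.exp (-(φ x) ^ 2)) (Set.Ioi 0) := by
    have := (integrableOn_image_iff_integrableOn_abs_deriv_smul measurableSet_Ioi hderiv
      hmono.injOn (fun u => Real.exp (-u ^ 2))).mp (by rw [himage]; exact hgauss_int.integrableOn)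
    refine this.congr_fun (fun x hx => ?_) measurableSet_Ioi
    simp only [smul_eq_mul, habs x hx]
  -- continuity of exp(-(φ x)^2) on Ioi 0
  have hconte : ContinuousOn (fun x => Real.exp (-(φ x) ^ 2)) (Set.Ioi 0) :=
    Real.continuous_exp.comp_continuousOn ((hcont.pow 2).neg)
  -- integrability of the two pieces
  have hK_int : IntegrableOn (fun x => Real.exp (-(φ x) ^ 2)) (Set.Ioi 0) := by
    refine Integrable.mono' (hint0.const_mul a⁻¹)
      (hconte.aestronglyMeasurable measurableSet_Ioi) ?_
    rw [ae_restrict_iff' measurableSet_Ioi]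
    filter_upwards with x hx
    have hx' : (0:ℝ) < x := hx
    have he : (0:ℝ) < Real.exp (-(φ x) ^ 2) := Real.exp_pos _
    have h1 : a ≤ φ' x := by
      simp only [hφ'_def]
      have : (0:ℝ) ≤ b / x ^ 2 := by positivity
      linarith
    have h2 : Real.exp (-(φ x) ^ 2) ≤ a⁻¹ * (φ' x * Real.exp (-(φ x) ^ 2)) := by
      rw [← mul_assoc]
      have h3 : (1:ℝ) ≤ a⁻¹ * φ' x := by
        rw [← inv_mul_cancel₀ (ne_of_gt ha)]
        exact mul_le_mul_of_nonneg_left h1 (by positivity)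
      nlinarith
    simpa [abs_of_pos he] using h2
  have hA_int : IntegrableOn (fun x => b / x ^ 2 * Real.exp (-(φ x) ^ 2)) (Set.Ioi 0) := by
    refine Integrable.mono' hint0 ?_ ?_
    · refine ContinuousOn.aestronglyMeasurable ?_ measurableSet_Ioi
      refine ContinuousOn.mul ?_ hconte
      exact continuousOn_const.div (continuousOn_pow 2) fun x hx => pow_ne_zero 2 (ne_of_gt (Set.mem_Ioi.mp hx))
    · rw [ae_restrict_iff' measurableSet_Ioi]
      filter_upwards with x hx
      have hx' : (0:ℝ) < x := hx
      have he : (0:ℝ) < Real.exp (-(φ x) ^ 2) := Real.exp_pos _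
      have h0 : (0:ℝ) ≤ b / x ^ 2 := by positivity
      have : b / x ^ 2 * Real.exp (-(φ x) ^ 2) ≤ φ' x * Real.exp (-(φ x) ^ 2) := by
        apply mul_le_mul_of_nonneg_right _ he.le
        simp only [hφ'_def]; linarith
      rw [Real.norm_eq_abs, abs_of_nonneg (mul_nonneg h0 he.le)]
      exact this
  -- K and A
  set K := ∫ x in Set.Ioi (0:ℝ), Real.exp (-(φ x) ^ 2) with hK_def
  set A := ∫ x in Set.Ioi (0:ℝ), b / x ^ 2 * Real.exp (-(φ x) ^ 2) with hA_def
  -- split the key integral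
  have hsplit : Real.sqrt π = a * K + A := by
    rw [key1]
    have : ∀ x ∈ Set.Ioi (0:ℝ), φ' x * Real.exp (-(φ x) ^ 2)
        = a * Real.exp (-(φ x) ^ 2) + b / x ^ 2 * Real.exp (-(φ x) ^ 2) := by
      intro x hx
      simp only [hφ'_def]; ring
    rw [setIntegral_congr_fun measurableSet_Ioi this,
      integral_add (hK_int.const_mul a) hA_int, integral_const_mul _ _]
  -- the inversion substitution x ↦ (b/a)/x shows A = a * K
  have hinv : A = a * K := by
    set r : ℝ := b / a with hr_def
    have hr : (0:ℝ) < r := by positivity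
    have hinv_deriv : ∀ x ∈ Set.Ioi (0:ℝ),
        HasDerivWithinAt (fun x : ℝ => r / x) (-(r / x ^ 2)) (Set.Ioi 0) x := by
      intro x hx
      have hx0 : x ≠ 0 := ne_of_gt hx
      have h1 : HasDerivAt (fun y : ℝ => r * y⁻¹) (r * (-(x ^ 2)⁻¹)) x :=
        (hasDerivAt_inv hx0).const_mul r
      have h2 : r * (-(x ^ 2)⁻¹) = -(r / x ^ 2) := by field_simp
      have h3 : (fun y : ℝ => r * y⁻¹) = fun y : ℝ => r / y := by
        funext y; rw [div_eq_mul_inv]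
      rw [h2, h3] at h1
      exact h1.hasDerivWithinAt
    have hinv_inj : Set.InjOn (fun x : ℝ => r / x) (Set.Ioi 0) := by
      intro x hx y hy hxy
      have hx0 : x ≠ 0 := ne_of_gt hx
      have hy0 : y ≠ 0 := ne_of_gt hy
      field_simp at hxy
      exact hxy.symm
    have hinv_img : (fun x : ℝ => r / x) '' Set.Ioi 0 = Set.Ioi 0 := by
      ext y
      constructor
      · rintro ⟨x, hx, rfl⟩
        have : (0:ℝ) < x := hx
        exact div_pos hr this
      · intro hy
        have hy' : (0:ℝ) < y := hy
        exact ⟨r / y, div_pos hr hy', by field_simp⟩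
    have key2 := integral_image_eq_integral_abs_deriv_smul measurableSet_Ioi hinv_deriv
      hinv_inj (fun x => Real.exp (-(φ x) ^ 2))
    rw [hinv_img] at key2
    have key3 : K = ∫ x in Set.Ioi (0:ℝ), r / x ^ 2 * Real.exp (-(φ x) ^ 2) := by
      rw [hK_def, key2]
      refine setIntegral_congr_fun measurableSet_Ioi fun x hx => ?_
      have hx' : (0:ℝ) < x := hx
      have hφr : φ (r / x) = -(φ x) := by
        simp only [hφ_def, hr_def]
        field_simp
        ring
      rw [smul_eq_mul, hφr, abs_neg, abs_of_pos (by positivity : (0:ℝ) < r / x ^ 2)]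
      ring_nf
    rw [hA_def, key3, ← integral_const_mul _ _]
    refine setIntegral_congr_fun measurableSet_Ioi fun x hx => ?_
    have hx' : (0:ℝ) < x := hx
    have : a * (r / x ^ 2) = b / x ^ 2 := by
      rw [hr_def]; field_simp
    rw [← mul_assoc, this]
  -- hence K = √π / (2a) and A = √π / 2
  have hApi : A = Real.sqrt π / 2 := by
    rw [hinv] at hsplit ⊢
    have : Real.sqrt π = 2 * (a * K) := by linarith
    linarith
  -- now the main substitution w = x^2
  have hsq_deriv : ∀ x ∈ Set.Ioi (0:ℝ),
      HasDerivWithinAt (fun x : ℝ => x ^ 2) (2 * x) (Set.Ioi 0) x := by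
    intro x hx
    have := hasDerivAt_pow 2 x
    simpa using this.hasDerivWithinAt
  have hsq_inj : Set.InjOn (fun x : ℝ => x ^ 2) (Set.Ioi 0) := by
    intro x hx y hy hxy
    have hx' : (0:ℝ) < x := hx
    have hy' : (0:ℝ) < y := hy
    have hxy' : x ^ 2 = y ^ 2 := hxy
    have : Real.sqrt (x ^ 2) = Real.sqrt (y ^ 2) := by rw [hxy']
    rwa [Real.sqrt_sq hx'.le, Real.sqrt_sq hy'.le] at this
  have hsq_img : (fun x : ℝ => x ^ 2) '' Set.Ioi 0 = Set.Ioi 0 := by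
    ext y
    constructor
    · rintro ⟨x, hx, rfl⟩
      have hx' : (0:ℝ) < x := hx
      exact pow_pos hx' 2
    · intro hy
      have hy' : (0:ℝ) < y := hy
      exact ⟨Real.sqrt y, Real.sqrt_pos.mpr hy', Real.sq_sqrt hy'.le⟩
  have key4 := integral_image_eq_integral_abs_deriv_smul measurableSet_Ioi hsq_deriv
    hsq_inj (fun w => w ^ (-(3:ℝ)/2) * Real.exp (-c*w) * Real.exp (-d/w))
  rw [hsq_img] at key4
  rw [key4]
  -- pointwise identity
  have hptwise : ∀ x ∈ Set.Ioi (0:ℝ),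
      |2 * x| • ((x ^ 2 : ℝ) ^ (-(3:ℝ)/2) * Real.exp (-c*(x^2)) * Real.exp (-d/(x^2)))
        = Real.exp (-2 * Real.sqrt (c*d)) *
          (2 / b * (b / x ^ 2 * Real.exp (-(φ x) ^ 2))) := by
    intro x hx
    have hx' : (0:ℝ) < x := hx
    have hx0 : x ≠ 0 := ne_of_gt hx'
    have hrpow : (x ^ 2 : ℝ) ^ (-(3:ℝ)/2) = (x ^ 3)⁻¹ := by
      have e1 : (x ^ 2 : ℝ) = x ^ ((2:ℕ):ℝ) := (Real.rpow_natCast x 2).symm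
      have e2 : (x ^ 3 : ℝ) = x ^ ((3:ℕ):ℝ) := (Real.rpow_natCast x 3).symm
      rw [e1, ← Real.rpow_mul hx'.le, e2, ← Real.rpow_neg hx'.le]
      congr 1
      push_cast
      ring
    have ha2 : a ^ 2 = c := Real.sq_sqrt hc.le
    have hb2 : b ^ 2 = d := Real.sq_sqrt hd.le
    have hab : a * b = Real.sqrt (c * d) := by
      rw [ha_def, hb_def, ← Real.sqrt_mul hc.le]
    have hφsq : (φ x) ^ 2 = c * x ^ 2 - 2 * Real.sqrt (c * d) + d / x ^ 2 := by
      simp only [hφ_def]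
      rw [← hab, ← ha2, ← hb2]
      field_simp
      ring
    have hexp : Real.exp (-c*(x^2)) * Real.exp (-d/(x^2))
        = Real.exp (-(φ x) ^ 2) * Real.exp (-2 * Real.sqrt (c*d)) := by
      rw [← Real.exp_add, ← Real.exp_add]
      congr 1
      rw [hφsq]
      ring
    calc |2 * x| • ((x ^ 2 : ℝ) ^ (-(3:ℝ)/2) * Real.exp (-c*(x^2)) * Real.exp (-d/(x^2)))
        = (2 * x) * ((x ^ 2 : ℝ) ^ (-(3:ℝ)/2) *
            (Real.exp (-c*(x^2)) * Real.exp (-d/(x^2)))) := by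
          rw [smul_eq_mul, abs_of_pos (by positivity : (0:ℝ) < 2 * x)]; ring
      _ = (2 * x) * ((x ^ 3)⁻¹ *
            (Real.exp (-(φ x) ^ 2) * Real.exp (-2 * Real.sqrt (c*d)))) := by
          rw [hexp, hrpow]
      _ = Real.exp (-2 * Real.sqrt (c*d)) *
            (2 / b * (b / x ^ 2 * Real.exp (-(φ x) ^ 2))) := by
          field_simp
  rw [setIntegral_congr_fun measurableSet_Ioi hptwise, integral_const_mul _ _,
    integral_const_mul _ _, ← hA_def, hApi]
  have hbπ : Real.sqrt (π / d) = Real.sqrt π / b := by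
    rw [hb_def, Real.sqrt_div Real.pi_nonneg]
  rw [hbπ]
  field_simp
end

section
/- For all real numbers x ≥ 2, y ≥ 2 and t > 0 satisfying x·y ≥ 2t, one has 0 ≤ exp(−(x−y)²/(2t)) / ( exp(−(x−y)²/(2t)) − exp(−(x+y−2)²/(2t)) ) − 1 ≤ (e/(e−1)) · exp(−x·y/(2t)). -/
open Real

theorem bessel_ratio_estimate (x y t : ℝ) (hx : 2 ≤ x) (hy : 2 ≤ y) (ht : 0 < t)
    (h : 2 * t ≤ x * y) :
    0 ≤ Real.exp (-(x - y)^2 / (2*t)) /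
          (Real.exp (-(x - y)^2 / (2*t)) - Real.exp (-(x + y - 2)^2 / (2*t))) - 1 ∧
      Real.exp (-(x - y)^2 / (2*t)) /
          (Real.exp (-(x - y)^2 / (2*t)) - Real.exp (-(x + y - 2)^2 / (2*t))) - 1
        ≤ (Real.exp 1 / (Real.exp 1 - 1)) * Real.exp (-(x*y) / (2*t)) := by
  have htne : t ≠ 0 := ne_of_gt ht
  set A := Real.exp (-(x - y)^2 / (2*t)) with hA
  set q := Real.exp (-(2*(x-1)*(y-1))/t) with hq
  have hB : Real.exp (-(x + y - 2)^2 / (2*t)) = A * q := by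
    rw [hA, hq, ← Real.exp_add]
    congr 1
    field_simp
    ring
  have hApos : 0 < A := Real.exp_pos _
  have hqpos : 0 < q := Real.exp_pos _
  have hq1 : q ≤ Real.exp (-1) := by
    rw [hq]
    apply Real.exp_le_exp.mpr
    rw [div_le_iff₀ ht]
    nlinarith [mul_nonneg (by linarith : (0:ℝ) ≤ x - 2) (by linarith : (0:ℝ) ≤ y - 2)]
  have hqr : q ≤ Real.exp (-(x*y)/(2*t)) := by
    rw [hq]
    apply Real.exp_le_exp.mpr
    rw [div_le_div_iff₀ ht (by linarith : (0:ℝ) < 2*t)]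
    nlinarith [mul_nonneg (mul_nonneg (by linarith : (0:ℝ) ≤ x - 2) (by linarith : (0:ℝ) ≤ y - 2)) ht.le,
      mul_nonneg (by linarith : (0:ℝ) ≤ x - 2) ht.le,
      mul_nonneg (by linarith : (0:ℝ) ≤ y - 2) ht.le]
  have hlt : q < 1 := lt_of_le_of_lt hq1 (by
    have h0 : Real.exp (-1:ℝ) < Real.exp 0 := Real.exp_lt_exp.mpr (by norm_num)
    simpa using h0)
  have hAne : A ≠ 0 := hApos.ne'
  have h1qne : (1:ℝ) - q ≠ 0 := by linarith
  have key : A / (A - Real.exp (-(x + y - 2)^2 / (2*t))) - 1 = q / (1 - q) := by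
    rw [hB]
    have h1 : A - A * q = A * (1 - q) := by ring
    rw [h1]
    field_simp [hAne, h1qne]
    ring
  rw [key]
  constructor
  · exact div_nonneg hqpos.le (by linarith)
  · have hepos : (0:ℝ) < Real.exp 1 := Real.exp_pos 1
    have he : (0:ℝ) < Real.exp 1 - 1 := by
      have := Real.add_one_lt_exp (by norm_num : (1:ℝ) ≠ 0); linarith
    have hinv : Real.exp (-1) = (Real.exp 1)⁻¹ := Real.exp_neg 1
    have hden : (Real.exp 1 - 1) / Real.exp 1 ≤ 1 - q := by
      have h2 : (Real.exp 1 - 1) / Real.exp 1 = 1 - Real.exp (-1) := by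
        rw [hinv]; field_simp
      rw [h2]; linarith
    have hdenpos : 0 < (Real.exp 1 - 1) / Real.exp 1 := div_pos he hepos
    calc q / (1 - q) ≤ Real.exp (-(x*y)/(2*t)) / ((Real.exp 1 - 1)/Real.exp 1) :=
          div_le_div₀ (Real.exp_pos _).le hqr hdenpos hden
      _ = (Real.exp 1 / (Real.exp 1 - 1)) * Real.exp (-(x*y)/(2*t)) := by
          field_simp
end

section
/- For all real numbers A > 0, B > 0 and t > 0, one has ∫₀ᵗ s^(−3/2) (t−s)^(−1/2) exp(−A/s) exp(−B/(t−s)) ds = t^(−1/2) · exp(−(A+B)/t) · ∫₀^∞ w^(−1/2) exp(−A·w) exp(−B/(t²·w)) dw. -/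
open MeasureTheory Real

theorem bessel_change_of_variables (A B t : ℝ) (hA : 0 < A) (hB : 0 < B) (ht : 0 < t) :
    ∫ s in Set.Ioo (0:ℝ) t,
        s ^ (-(3:ℝ)/2) * (t - s) ^ (-(1:ℝ)/2) * Real.exp (-A/s) * Real.exp (-B/(t-s))
      = t ^ (-(1:ℝ)/2) * Real.exp (-(A + B)/t) *
        ∫ w in Set.Ioi (0:ℝ), w ^ (-(1:ℝ)/2) * Real.exp (-A*w) * Real.exp (-B/(t^2*w)) := by
  have ht' : t ≠ 0 := ht.ne'
  set f : ℝ → ℝ := fun w => t / (t * w + 1) with hfdef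
  set f' : ℝ → ℝ := fun w => -(t^2) / (t * w + 1)^2 with hf'def
  have hc : ∀ w : ℝ, w ∈ Set.Ioi (0:ℝ) → 0 < t * w + 1 := by
    intro w hw
    have : 0 < t * w := mul_pos ht hw
    linarith
  have hderiv : ∀ w ∈ Set.Ioi (0:ℝ), HasDerivWithinAt f (f' w) (Set.Ioi 0) w := by
    intro w hw
    have hcw : t * w + 1 ≠ 0 := (hc w hw).ne'
    have h1 : HasDerivAt (fun w : ℝ => t * w + 1) t w := by
      simpa using ((hasDerivAt_id w).const_mul t).add_const 1
    have h2 : HasDerivAt f ((0 * (t * w + 1) - t * t) / (t * w + 1)^2) w :=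
      (hasDerivAt_const w t).div h1 hcw
    have h3 : f' w = (0 * (t * w + 1) - t * t) / (t * w + 1)^2 := by
      simp only [hf'def]; ring_nf
    rw [h3]
    exact h2.hasDerivWithinAt
  have hinj : Set.InjOn f (Set.Ioi 0) := by
    intro a ha b hb hab
    have hca : t * a + 1 ≠ 0 := (hc a ha).ne'
    have hcb : t * b + 1 ≠ 0 := (hc b hb).ne'
    simp only [hfdef] at hab
    rw [div_eq_div_iff hca hcb] at hab
    have : t * t * a = t * t * b := by nlinarith [hab]
    have htt : t * t ≠ 0 := by positivity
    exact mul_left_cancel₀ htt this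
  have himg : f '' Set.Ioi 0 = Set.Ioo 0 t := by
    apply Set.Subset.antisymm
    · rintro s ⟨w, hw, rfl⟩
      have hw' : (0:ℝ) < w := hw
      have hcw : 0 < t * w + 1 := hc w hw
      constructor
      · exact div_pos ht hcw
      · rw [div_lt_iff₀ hcw]
        nlinarith [mul_pos (mul_pos ht ht) hw']
    · rintro s ⟨hs0, hst⟩
      refine ⟨(t - s) / (t * s), ?_, ?_⟩
      · exact Set.mem_Ioi.mpr (div_pos (by linarith) (by positivity))
      · simp only [hfdef]
        field_simp
        ring
  rw [← himg, integral_image_eq_integral_abs_deriv_smul measurableSet_Ioi hderiv hinj,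
    ← integral_const_mul]
  refine setIntegral_congr_fun measurableSet_Ioi (fun w hw => ?_)
  have hw' : (0:ℝ) < w := hw
  have hcw : 0 < t * w + 1 := hc w hw
  have hcw' : t * w + 1 ≠ 0 := hcw.ne'
  have hs : 0 < t / (t * w + 1) := div_pos ht hcw
  have hts : (0:ℝ) < t^2 * w / (t * w + 1) := by positivity
  simp only [hfdef, hf'def, smul_eq_mul]
  have h1 : t - t / (t * w + 1) = t^2 * w / (t * w + 1) := by
    field_simp; ring
  rw [h1]
  have habs : |(-(t^2) / (t * w + 1)^2)| = t^2 / (t * w + 1)^2 := by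
    rw [show -(t^2) / (t * w + 1)^2 = -(t^2 / (t * w + 1)^2) by ring, abs_neg,
      abs_of_pos (by positivity)]
  rw [habs]
  have hexp1 : Real.exp (-A / (t / (t * w + 1))) = Real.exp (-A * w) * Real.exp (-(A / t)) := by
    rw [← Real.exp_add]; congr 1; field_simp; ring
  have hexp2 : Real.exp (-B / (t^2 * w / (t * w + 1)))
      = Real.exp (-B / (t^2 * w)) * Real.exp (-(B / t)) := by
    rw [← Real.exp_add]; congr 1; field_simp; ring
  have hexp3 : Real.exp (-(A + B) / t) = Real.exp (-(A / t)) * Real.exp (-(B / t)) := by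
    rw [← Real.exp_add]; congr 1; ring
  rw [hexp1, hexp2, hexp3]
  -- key power identity
  have key : t^2 / (t * w + 1)^2 * ((t / (t * w + 1)) ^ (-(3:ℝ)/2)
      * (t^2 * w / (t * w + 1)) ^ (-(1:ℝ)/2))
      = t ^ (-(1:ℝ)/2) * w ^ (-(1:ℝ)/2) := by
    have e1 : t^2 / (t * w + 1)^2 = (t / (t * w + 1)) ^ (2:ℝ) := by
      rw [Real.rpow_two, div_pow]
    rw [e1, ← mul_assoc, ← Real.rpow_add hs]
    have e2 : (2:ℝ) + -(3:ℝ)/2 = (1:ℝ)/2 := by norm_num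
    rw [e2]
    have e3 : (t^2 * w / (t * w + 1)) ^ (-(1:ℝ)/2)
        = ((t^2 * w / (t * w + 1))⁻¹) ^ ((1:ℝ)/2) := by
      rw [Real.inv_rpow hts.le, ← Real.rpow_neg hts.le]
      norm_num
    rw [e3, ← Real.mul_rpow hs.le (by positivity)]
    have e4 : t / (t * w + 1) * (t^2 * w / (t * w + 1))⁻¹ = (t * w)⁻¹ := by
      field_simp
    rw [e4]
    have htw : (0:ℝ) ≤ t * w := by positivity
    have e5 : ((t * w)⁻¹) ^ ((1:ℝ)/2) = (t * w) ^ (-(1:ℝ)/2) := by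
      rw [Real.inv_rpow htw, ← Real.rpow_neg htw]
      norm_num
    rw [e5, Real.mul_rpow ht.le hw'.le]
  calc t^2 / (t * w + 1)^2 * ((t / (t * w + 1)) ^ (-(3:ℝ)/2)
        * (t^2 * w / (t * w + 1)) ^ (-(1:ℝ)/2)
        * (Real.exp (-A * w) * Real.exp (-(A / t)))
        * (Real.exp (-B / (t^2 * w)) * Real.exp (-(B / t))))
      = (t^2 / (t * w + 1)^2 * ((t / (t * w + 1)) ^ (-(3:ℝ)/2)
        * (t^2 * w / (t * w + 1)) ^ (-(1:ℝ)/2)))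
        * (Real.exp (-A * w) * Real.exp (-(A / t))
        * (Real.exp (-B / (t^2 * w)) * Real.exp (-(B / t)))) := by ring
    _ = _ := by rw [key]; ring
end
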